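/- arXiv:1911.03816 — 2 statements merged into one kernel-verified Lean document; each statement's English description precedes it below -/
import Mathlib

section
/- Let 0 < α ≤ √2 − 1. Then any ℕ-valued random variable X satisfying the recursive distributional equation has P(X = 0) = 1 − α. -/
open scoped ENNReal

set_option maxHeartbeats 1000000

/-- The Poisson(α) probability mass function on ℕ. -/
noncomputable def poissonPMF (α : ℝ) (k : ℕ) : ℝ≥0∞ :=
  ENNReal.ofReal (Real.exp (-α) * α ^ k / (Nat.factorial k))

/-- The Geometric(1/2) pmf: P(N = k) = (1/2)^(k+1) for k ≥ 0. -/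
noncomputable def geomHalf (k : ℕ) : ℝ≥0∞ := (1 / 2) ^ (k + 1)

/-- The law of (X - 1)⁺ when X has law μ on ℕ. -/
noncomputable def shiftLaw (μ : ℕ → ℝ≥0∞) (k : ℕ) : ℝ≥0∞ :=
  if k = 0 then μ 0 + μ 1 else μ (k + 1)

/-- Convolution of two (sub-)pmfs on ℕ: the law of an independent sum. -/
noncomputable def convAdd (f g : ℕ → ℝ≥0∞) (k : ℕ) : ℝ≥0∞ :=
  ∑ j ∈ Finset.range (k + 1), f j * g (k - j)

/-- n-fold convolution of a pmf on ℕ: the law of a sum of n i.i.d. copies. -/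
noncomputable def iterConv (f : ℕ → ℝ≥0∞) : ℕ → ℕ → ℝ≥0∞
  | 0 => fun k => if k = 0 then 1 else 0
  | n + 1 => convAdd (iterConv f n) f

/-- μ is the law of an ℕ-valued random variable X satisfying the RDE
    X =_d P + ∑_{i=1}^N (X_i - 1)⁺, with P ~ Poisson(α), N ~ Geom(1/2),
    X_i i.i.d. with law μ, all independent. -/
def SatisfiesRDE (α : ℝ) (μ : ℕ → ℝ≥0∞) : Prop :=
  (∑' k, μ k) = 1 ∧
  ∀ k, μ k = ∑' n, geomHalf n * convAdd (poissonPMF α) (iterConv (shiftLaw μ) n) k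

/-- The probability generating function G(s) = E[s^X]. -/
noncomputable def pgf (μ : ℕ → ℝ≥0∞) (s : ℝ) : ℝ := ∑' k, (μ k).toReal * s ^ k

/-- The mean E[X] = ∑ k · P(X = k), valued in [0,∞]. -/
noncomputable def meanENN (μ : ℕ → ℝ≥0∞) : ℝ≥0∞ := ∑' k : ℕ, (k : ℝ≥0∞) * μ k

/-- ENNReal generating function. -/
noncomputable def egf (f : ℕ → ℝ≥0∞) (x : ℝ≥0∞) : ℝ≥0∞ := ∑' k, f k * x ^ k

lemma egf_convAdd (f g : ℕ → ℝ≥0∞) (x : ℝ≥0∞) :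
    egf (convAdd f g) x = egf f x * egf g x := by
  set F : ℕ × ℕ → ℝ≥0∞ := fun p => (f p.1 * x ^ p.1) * (g p.2 * x ^ p.2) with hF
  have h1 : ∀ k : ℕ, convAdd f g k * x ^ k = ∑ kl ∈ Finset.HasAntidiagonal.antidiagonal k, F kl := by
    intro k
    rw [convAdd, Finset.sum_mul,
      ← Finset.Nat.sum_antidiagonal_eq_sum_range_succ (fun i j => f i * g j * x ^ k) k]
    refine Finset.sum_congr rfl fun kl hkl => ?_
    rw [Finset.HasAntidiagonal.mem_antidiagonal] at hkl
    simp only [hF, ← hkl, pow_add]; ring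
  have h2 : ∀ k : ℕ, (∑ kl ∈ Finset.HasAntidiagonal.antidiagonal k, F kl)
      = ∑' kl : (Finset.HasAntidiagonal.antidiagonal k : Finset (ℕ × ℕ)), F kl :=
    fun k => (Finset.tsum_subtype _ F).symm
  calc egf (convAdd f g) x
      = ∑' (k : ℕ) (kl : (Finset.HasAntidiagonal.antidiagonal k : Finset (ℕ × ℕ))), F kl := by
        simp_rw [egf, h1, h2]
    _ = ∑' σ : Σ k : ℕ, (Finset.HasAntidiagonal.antidiagonal k : Finset (ℕ × ℕ)), F σ.2 :=
        (ENNReal.tsum_sigma' (fun σ : Σ k : ℕ, (Finset.HasAntidiagonal.antidiagonal k : Finset (ℕ × ℕ)) => F σ.2)).symm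
    _ = ∑' p : ℕ × ℕ, F p := Finset.HasAntidiagonal.sigmaAntidiagonalEquivProd.tsum_eq F
    _ = ∑' (a : ℕ) (b : ℕ), F (a, b) := ENNReal.tsum_prod'
    _ = egf f x * egf g x := by
        simp_rw [egf, hF, ENNReal.tsum_mul_left, ENNReal.tsum_mul_right]

lemma egf_iterConv (f : ℕ → ℝ≥0∞) (x : ℝ≥0∞) (n : ℕ) :
    egf (iterConv f n) x = (egf f x) ^ n := by
  induction n with
  | zero =>
      rw [egf, pow_zero, tsum_eq_single 0 (by intro b hb; simp [iterConv, hb])]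
      simp [iterConv]
  | succ n ih => rw [iterConv, egf_convAdd, ih, pow_succ]

lemma egf_poisson {α : ℝ} (hα : 0 ≤ α) {s : ℝ} (hs0 : 0 ≤ s) :
    egf (poissonPMF α) (ENNReal.ofReal s) = ENNReal.ofReal (Real.exp (α * (s - 1))) := by
  have hsum : Summable (fun k : ℕ => Real.exp (-α) * ((α * s) ^ k / (Nat.factorial k))) :=
    (Real.summable_pow_div_factorial (α * s)).mul_left _
  have h1 : ∀ k : ℕ, poissonPMF α k * (ENNReal.ofReal s) ^ k
      = ENNReal.ofReal (Real.exp (-α) * ((α * s) ^ k / (Nat.factorial k))) := by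
    intro k
    rw [poissonPMF, ← ENNReal.ofReal_pow hs0, ← ENNReal.ofReal_mul (by positivity)]
    congr 1
    rw [mul_pow]; ring
  rw [egf]
  simp_rw [h1]
  rw [← ENNReal.ofReal_tsum_of_nonneg (fun k => by positivity) hsum]
  congr 1
  rw [tsum_mul_left]
  have hexp : ∑' k : ℕ, (α * s) ^ k / (Nat.factorial k) = Real.exp (α * s) := by
    rw [Real.exp_eq_exp_ℝ, NormedSpace.exp_eq_tsum_div]
  rw [hexp, ← Real.exp_add]
  congr 1; ring

lemma tsum_shiftLaw (μ : ℕ → ℝ≥0∞) : ∑' k, shiftLaw μ k = ∑' k, μ k := by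
  have hL : ∑' k, shiftLaw μ k = (μ 0 + μ 1) + ∑' k, μ (k + 2) := by
    rw [tsum_eq_zero_add' ENNReal.summable]
    simp [shiftLaw]
  have hR : ∑' k, μ k = μ 0 + (μ 1 + ∑' k, μ (k + 2)) := by
    rw [tsum_eq_zero_add' ENNReal.summable]
    congr 1
    rw [tsum_eq_zero_add' ENNReal.summable]
  rw [hL, hR, add_assoc]

lemma egf_le_tsum (f : ℕ → ℝ≥0∞) {x : ℝ≥0∞} (hx : x ≤ 1) : egf f x ≤ ∑' k, f k := by
  refine ENNReal.tsum_le_tsum fun k => ?_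
  calc f k * x ^ k ≤ f k * 1 := mul_le_mul_right (pow_le_one' hx k) _
  _ = f k := mul_one _

lemma egf_shift (μ : ℕ → ℝ≥0∞) (x : ℝ≥0∞) :
    x * egf (shiftLaw μ) x + μ 0 = egf μ x + μ 0 * x := by
  have h1 : x * egf (shiftLaw μ) x = ∑' k, shiftLaw μ k * x ^ (k + 1) := by
    rw [egf, ← ENNReal.tsum_mul_left]
    congr 1; ext k; rw [pow_succ]; ring
  have h2 : ∑' k, shiftLaw μ k * x ^ (k + 1)
      = (μ 0 + μ 1) * x + ∑' k, μ (k + 2) * x ^ (k + 2) := by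
    rw [tsum_eq_zero_add' ENNReal.summable]
    simp [shiftLaw]
  have h3 : egf μ x = μ 0 + (μ 1 * x + ∑' k, μ (k + 2) * x ^ (k + 2)) := by
    rw [egf, tsum_eq_zero_add' ENNReal.summable]
    congr 1
    · simp
    · rw [tsum_eq_zero_add' ENNReal.summable]
      simp [pow_succ]
  rw [h1, h2, h3]; ring

lemma egf_mixture {α : ℝ} {μ : ℕ → ℝ≥0∞} (hμ : SatisfiesRDE α μ) (x : ℝ≥0∞) (hx : x ≤ 1) :
    egf μ x * 2 = egf (poissonPMF α) x + egf μ x * egf (shiftLaw μ) x := by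
  set TE := egf (poissonPMF α) x with hTE
  set r := egf (shiftLaw μ) x with hr
  have hr1 : r ≤ 1 := by
    rw [hr]
    calc egf (shiftLaw μ) x ≤ ∑' k, shiftLaw μ k := egf_le_tsum _ hx
    _ = 1 := by rw [tsum_shiftLaw, hμ.1]
  have step1 : egf μ x = ∑' n, geomHalf n * (TE * r ^ n) := by
    have hk : ∀ k, μ k * x ^ k
        = ∑' n, geomHalf n * (convAdd (poissonPMF α) (iterConv (shiftLaw μ) n) k * x ^ k) := by
      intro k
      conv_lhs => rw [hμ.2 k]
      rw [← ENNReal.tsum_mul_right]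
      congr 1; ext n; ring
    rw [egf]
    simp_rw [hk]
    rw [ENNReal.tsum_comm]
    congr 1; ext n
    rw [ENNReal.tsum_mul_left]
    congr 1
    have : ∑' k, convAdd (poissonPMF α) (iterConv (shiftLaw μ) n) k * x ^ k
        = egf (convAdd (poissonPMF α) (iterConv (shiftLaw μ) n)) x := rfl
    rw [this, egf_convAdd, egf_iterConv]
  have step2 : egf μ x = TE * 2⁻¹ * (1 - r * 2⁻¹)⁻¹ := by
    rw [step1]
    have : ∀ n : ℕ, geomHalf n * (TE * r ^ n) = (TE * 2⁻¹) * (r * 2⁻¹) ^ n := by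
      intro n
      rw [geomHalf, mul_pow, pow_succ, one_div]
      ring
    simp_rw [this]
    rw [ENNReal.tsum_mul_left, ENNReal.tsum_geometric, mul_assoc]
  set w : ℝ≥0∞ := 1 - r * 2⁻¹ with hw
  have hrh : r * 2⁻¹ ≤ 2⁻¹ := by
    calc r * 2⁻¹ ≤ 1 * 2⁻¹ := mul_le_mul_left hr1 _
    _ = 2⁻¹ := one_mul _
  have hw0 : w ≠ 0 := by
    rw [hw, ← pos_iff_ne_zero, tsub_pos_iff_lt]
    exact lt_of_le_of_lt hrh (by norm_num)
  have hwt : w ≠ ⊤ := by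
    rw [hw]
    exact ne_top_of_le_ne_top ENNReal.one_ne_top tsub_le_self
  have hca : w + r * 2⁻¹ = 1 := by
    rw [hw]
    exact tsub_add_cancel_of_le (le_trans hrh (by norm_num))
  have key : w⁻¹ = 1 + w⁻¹ * (r * 2⁻¹) := by
    calc w⁻¹ = w⁻¹ * (w + r * 2⁻¹) := by rw [hca, mul_one]
    _ = w⁻¹ * w + w⁻¹ * (r * 2⁻¹) := mul_add _ _ _
    _ = 1 + w⁻¹ * (r * 2⁻¹) := by rw [ENNReal.inv_mul_cancel hw0 hwt]
  have h22 : (2⁻¹ : ℝ≥0∞) * 2 = 1 := by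
    rw [mul_comm]
    exact ENNReal.mul_inv_cancel (by norm_num) (by norm_num)
  calc egf μ x * 2 = TE * w⁻¹ * (2⁻¹ * 2) := by rw [step2]; ring
  _ = TE * w⁻¹ := by rw [h22, mul_one]
  _ = TE * (1 + w⁻¹ * (r * 2⁻¹)) := by rw [← key]
  _ = TE + (TE * 2⁻¹ * w⁻¹) * r := by ring
  _ = TE + egf μ x * r := by rw [← step2]

lemma egf_ofReal_eq {f : ℕ → ℝ≥0∞} (hf : ∀ k, f k ≠ ⊤) {s : ℝ} (hs0 : 0 ≤ s)
    (hsum : Summable fun k => (f k).toReal * s ^ k) :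
    egf f (ENNReal.ofReal s) = ENNReal.ofReal (∑' k, (f k).toReal * s ^ k) := by
  have h1 : ∀ k, f k * (ENNReal.ofReal s) ^ k = ENNReal.ofReal ((f k).toReal * s ^ k) := by
    intro k
    conv_lhs => rw [← ENNReal.ofReal_toReal (hf k)]
    rw [← ENNReal.ofReal_pow hs0, ← ENNReal.ofReal_mul ENNReal.toReal_nonneg]
  rw [egf]
  simp_rw [h1]
  rw [← ENNReal.ofReal_tsum_of_nonneg
    (fun k => mul_nonneg ENNReal.toReal_nonneg (pow_nonneg hs0 k)) hsum]

lemma real_MI {α : ℝ} (hα : 0 < α) {μ : ℕ → ℝ≥0∞} (hμ : SatisfiesRDE α μ)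
    {s : ℝ} (hs0 : 0 ≤ s) (hs1 : s ≤ 1) :
    pgf μ s * (((2 - (μ 0).toReal) * s + (μ 0).toReal) - pgf μ s)
      = s * Real.exp (α * (s - 1)) := by
  have hμtop : ∀ k, μ k ≠ ⊤ :=
    fun k => ne_top_of_le_ne_top (hμ.1 ▸ ENNReal.one_ne_top) (ENNReal.le_tsum k)
  have hνtop : ∀ k, shiftLaw μ k ≠ ⊤ := by
    intro k
    rw [shiftLaw]
    split
    · exact ENNReal.add_ne_top.mpr ⟨hμtop 0, hμtop 1⟩
    · exact hμtop _
  have hsumμ : Summable fun k => (μ k).toReal :=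
    ENNReal.summable_toReal (by rw [hμ.1]; exact ENNReal.one_ne_top)
  have hsumν : Summable fun k => (shiftLaw μ k).toReal :=
    ENNReal.summable_toReal (by rw [tsum_shiftLaw, hμ.1]; exact ENNReal.one_ne_top)
  have hb : ∀ (f : ℕ → ℝ≥0∞), (Summable fun k => (f k).toReal) →
      Summable fun k => (f k).toReal * s ^ k := by
    intro f hsum
    refine Summable.of_nonneg_of_le
      (fun k => mul_nonneg ENNReal.toReal_nonneg (pow_nonneg hs0 k)) (fun k => ?_) hsum
    calc (f k).toReal * s ^ k ≤ (f k).toReal * 1 :=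
          mul_le_mul_of_nonneg_left (pow_le_one₀ hs0 hs1) ENNReal.toReal_nonneg
    _ = _ := mul_one _
  set x := ENNReal.ofReal s with hxdef
  have hx1 : x ≤ 1 := ENNReal.ofReal_le_one.mpr hs1
  set G := pgf μ s with hGdef
  set H := ∑' k, (shiftLaw μ k).toReal * s ^ k with hHdef
  set E := Real.exp (α * (s - 1)) with hEdef
  set p := (μ 0).toReal with hpdef
  have hGnn : 0 ≤ G := tsum_nonneg fun k => mul_nonneg ENNReal.toReal_nonneg (pow_nonneg hs0 k)
  have hHnn : 0 ≤ H := tsum_nonneg fun k => mul_nonneg ENNReal.toReal_nonneg (pow_nonneg hs0 k)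
  have hEnn : 0 ≤ E := Real.exp_nonneg _
  have hpnn : 0 ≤ p := ENNReal.toReal_nonneg
  have hGeq : egf μ x = ENNReal.ofReal G := egf_ofReal_eq hμtop hs0 (hb _ hsumμ)
  have hHeq : egf (shiftLaw μ) x = ENNReal.ofReal H := egf_ofReal_eq hνtop hs0 (hb _ hsumν)
  have hEeq : egf (poissonPMF α) x = ENNReal.ofReal E := egf_poisson hα.le hs0
  have e1 : G * 2 = E + G * H := by
    have h := egf_mixture hμ x hx1
    rw [hGeq, hHeq, hEeq] at h
    rw [show (2 : ℝ≥0∞) = ENNReal.ofReal 2 by simp] at h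
    rw [← ENNReal.ofReal_mul hGnn, ← ENNReal.ofReal_mul hGnn,
      ← ENNReal.ofReal_add hEnn (mul_nonneg hGnn hHnn)] at h
    exact (ENNReal.ofReal_eq_ofReal_iff (by positivity)
      (by positivity)).mp h
  have e2 : s * H + p = G + p * s := by
    have h := egf_shift μ x
    rw [hGeq, hHeq] at h
    rw [show μ 0 = ENNReal.ofReal p by rw [hpdef, ENNReal.ofReal_toReal (hμtop 0)]] at h
    rw [← ENNReal.ofReal_mul hs0, ← ENNReal.ofReal_add (mul_nonneg hs0 hHnn) hpnn,
      ← ENNReal.ofReal_mul hpnn, ← ENNReal.ofReal_add hGnn (mul_nonneg hpnn hs0)] at h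
    exact (ENNReal.ofReal_eq_ofReal_iff (by positivity) (by positivity)).mp h
  linear_combination s * e1 + G * e2

lemma exp_neg_cubic_bound {y : ℝ} (h0 : 0 ≤ y) (h1 : y ≤ 1) :
    Real.exp (-y) ≤ 1 - y + y ^ 2 / 2 + (2 / 9) * y ^ 3 := by
  have hb := Real.exp_bound (x := -y) (by rwa [abs_neg, abs_of_nonneg h0]) (n := 3) (by norm_num)
  rw [abs_neg, abs_of_nonneg h0] at hb
  have hsum : ∑ m ∈ Finset.range 3, (-y) ^ m / (Nat.factorial m) = 1 - y + y ^ 2 / 2 := by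
    rw [Finset.sum_range_succ, Finset.sum_range_succ, Finset.sum_range_one]
    norm_num [Nat.factorial]; ring
  rw [hsum] at hb
  have h2 := (abs_le.mp hb).2
  have h3 : y ^ 3 * ((Nat.succ 3 : ℝ) / ((Nat.factorial 3 : ℕ) * (3:ℕ)) ) = 2 / 9 * y ^ 3 := by
    norm_num [Nat.factorial]; ring
  rw [h3] at h2
  linarith

/-- For 0 < α ≤ √2 − 1, any ℕ-valued random variable X satisfying the
RDE has P(X = 0) = 1 − α. -/
theorem prob_zero_eq_one_sub_alpha
    (α : ℝ) (hα0 : 0 < α) (hα1 : α ≤ Real.sqrt 2 - 1)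
    (μ : ℕ → ℝ≥0∞) (hμ : SatisfiesRDE α μ) :
    (μ 0).toReal = 1 - α := by
  have hμtop : ∀ k, μ k ≠ ⊤ :=
    fun k => ne_top_of_le_ne_top (hμ.1 ▸ ENNReal.one_ne_top) (ENNReal.le_tsum k)
  have hsumμ : Summable fun k => (μ k).toReal :=
    ENNReal.summable_toReal (by rw [hμ.1]; exact ENNReal.one_ne_top)
  have htot : ∑' k, (μ k).toReal = 1 := by
    rw [← ENNReal.tsum_toReal_eq hμtop, hμ.1]; simp
  set p := (μ 0).toReal with hpdef
  have hak_le : ∀ k, (μ k).toReal ≤ 1 := by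
    intro k
    calc (μ k).toReal ≤ ∑' j, (μ j).toReal :=
          Summable.le_tsum hsumμ k (fun j _ => ENNReal.toReal_nonneg)
    _ = 1 := htot
  have hp1 : p ≤ 1 := hak_le 0
  have hp0 : 0 < p := by
    have h0 : geomHalf 0 * convAdd (poissonPMF α) (iterConv (shiftLaw μ) 0) 0 ≤ μ 0 := by
      conv_rhs => rw [hμ.2 0]
      exact ENNReal.le_tsum 0
    have hc : convAdd (poissonPMF α) (iterConv (shiftLaw μ) 0) 0 = poissonPMF α 0 := by
      rw [convAdd, Finset.sum_range_one]
      simp [iterConv]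
    rw [hc] at h0
    have hppos : 0 < poissonPMF α 0 := by
      rw [poissonPMF]
      simp only [pow_zero, Nat.factorial_zero]
      apply ENNReal.ofReal_pos.mpr
      positivity
    have hg0 : (0:ℝ≥0∞) < geomHalf 0 := by rw [geomHalf]; norm_num
    have hμ0 : 0 < μ 0 := lt_of_lt_of_le (ENNReal.mul_pos hg0.ne' hppos.ne') h0
    exact ENNReal.toReal_pos hμ0.ne' (hμtop 0)
  have hsummand : ∀ {s : ℝ}, 0 ≤ s → s ≤ 1 → Summable fun k => (μ k).toReal * s ^ k := by
    intro s h0 h1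
    refine Summable.of_nonneg_of_le
      (fun k => mul_nonneg ENNReal.toReal_nonneg (pow_nonneg h0 k)) (fun k => ?_) hsumμ
    calc (μ k).toReal * s ^ k ≤ (μ k).toReal * 1 :=
          mul_le_mul_of_nonneg_left (pow_le_one₀ h0 h1) ENNReal.toReal_nonneg
    _ = _ := mul_one _
  have hpgf_ge : ∀ {s : ℝ}, 0 ≤ s → s ≤ 1 → p ≤ pgf μ s := by
    intro s h0 h1
    have := Summable.le_tsum (hsummand h0 h1) 0
      (fun j _ => mul_nonneg ENNReal.toReal_nonneg (pow_nonneg h0 j))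
    simpa [pgf] using this
  have hchord : ∀ {t : ℝ}, 0 ≤ t → t ≤ 1 → pgf μ t ≤ t + (1 - t) * p := by
    intro t h0t ht1
    have hs1 : Summable (fun k => t * (μ k).toReal) := hsumμ.mul_left t
    have hs2 : Summable (fun k : ℕ => if k = 0 then (1 - t) * p else 0) :=
      summable_of_ne_finset_zero (s := {0}) (by intro b hb; simp at hb; simp [hb])
    have hle : ∀ k, (μ k).toReal * t ^ k
        ≤ t * (μ k).toReal + (if k = 0 then (1 - t) * p else 0) := by
      intro k
      cases k with
      | zero =>
          rw [hpdef]
          simp only [pow_zero, mul_one, if_pos rfl, if_true]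
          have hr : t * (μ 0).toReal + (1 - t) * (μ 0).toReal = (μ 0).toReal := by ring
          linarith
      | succ n =>
          simp only [if_neg (Nat.succ_ne_zero n), add_zero]
          have htp : t ^ (n + 1) ≤ t := by
            calc t ^ (n + 1) ≤ t ^ 1 := pow_le_pow_of_le_one h0t ht1 (by omega)
            _ = t := pow_one t
          calc (μ (n+1)).toReal * t ^ (n+1) ≤ (μ (n+1)).toReal * t :=
                mul_le_mul_of_nonneg_left htp ENNReal.toReal_nonneg
          _ = t * (μ (n+1)).toReal := mul_comm _ _
    calc pgf μ t ≤ ∑' k, (t * (μ k).toReal + (if k = 0 then (1 - t) * p else 0)) :=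
          Summable.tsum_le_tsum hle (hsummand h0t ht1) (hs1.add hs2)
    _ = t * (∑' k, (μ k).toReal) + (1 - t) * p := by
          rw [Summable.tsum_add hs1 hs2, tsum_mul_left, tsum_ite_eq]
    _ = t + (1 - t) * p := by rw [htot, mul_one]
  have hcont : ∀ {r : ℝ}, 0 ≤ r → r < 1 → ContinuousOn (pgf μ) (Set.Icc 0 r) := by
    intro r h0r hr1
    refine continuousOn_tsum
      (fun k => (continuousOn_const.mul ((continuous_pow k).continuousOn)))
      (summable_geometric_of_lt_one h0r hr1) ?_
    intro k x hx
    rw [Real.norm_eq_abs, abs_of_nonneg (mul_nonneg ENNReal.toReal_nonneg (pow_nonneg hx.1 k))]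
    calc (μ k).toReal * x ^ k ≤ 1 * r ^ k :=
          mul_le_mul (hak_le k) (pow_le_pow_left₀ hx.1 hx.2 k) (pow_nonneg hx.1 k) one_pos.le
    _ = r ^ k := one_mul _
  have hs2sq : Real.sqrt 2 ^ 2 = 2 := Real.sq_sqrt (by norm_num)
  have hs2nn : 0 ≤ Real.sqrt 2 := Real.sqrt_nonneg 2
  have h1α2 : (1 + α) ^ 2 ≤ 2 := by nlinarith
  have hαlt1 : α < 1 := by nlinarith
  rcases lt_trichotomy p (1 - α) with hc | hc | hc
  · -- case p < 1 - α : contradiction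
    exfalso
    set u : ℝ := (1 - α - p) / 2 with hudef
    have hu0 : 0 < u := by rw [hudef]; linarith
    have hu12 : u < 1 / 2 := by rw [hudef]; linarith
    set s : ℝ := 1 - u with hsdef
    have hs0 : (0:ℝ) ≤ s := by rw [hsdef]; linarith
    have hs1 : s ≤ 1 := by rw [hsdef]; linarith
    have MI := real_MI hα0 hμ hs0 hs1
    have hsq : (2 * pgf μ s - ((2 - p) * s + p)) ^ 2
        = ((2 - p) * s + p) ^ 2 - 4 * s * Real.exp (α * (s - 1)) := by
      linear_combination (-4) * MI
    have harg : α * (s - 1) = -(α * u) := by rw [hsdef]; ring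
    have hElb : 1 - α * u ≤ Real.exp (α * (s - 1)) := by
      rw [harg]; exact Real.one_sub_le_exp_neg (α * u)
    have hE4 : 4 * s * (1 - α * u) ≤ 4 * s * Real.exp (α * (s - 1)) :=
      mul_le_mul_of_nonneg_left hElb (by linarith)
    have key : ((2 - p) * s + p) ^ 2 - 4 * s * (1 - α * u)
        = u ^ 2 * ((2 - p) ^ 2 - 4 * α - 8) := by
      rw [hsdef, hudef]; ring
    have h2p : (2 - p) ^ 2 ≤ 4 := by nlinarith
    have hneg : ((2 - p) * s + p) ^ 2 - 4 * s * (1 - α * u) < 0 := by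
      rw [key]
      have : (2 - p) ^ 2 - 4 * α - 8 < 0 := by linarith
      nlinarith [sq_nonneg u, mul_pos hu0 hu0]
    nlinarith [sq_nonneg (2 * pgf μ s - ((2 - p) * s + p))]
  · linarith
  · -- case p > 1 - α : contradiction
    exfalso
    have hδ : 0 < p + α - 1 := by linarith
    have hδ1 : p + α - 1 ≤ 1 := by linarith
    have hexpQ : ∀ {u : ℝ}, 0 < u → u < 1 →
        Real.exp (-(α * u)) ≤ 1 - α * u + (α * u) ^ 2 / 2 + (2 / 9) * (α * u) ^ 3 := by
      intro u h0 h1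
      exact exp_neg_cubic_bound (by positivity) (by nlinarith)
    have hDpos : ∀ t : ℝ, 0 < t → t < 1 →
        0 < ((2 - p) * t + p) ^ 2 - 4 * t * Real.exp (α * (t - 1)) := by
      intro t h0t ht1
      have harg : α * (t - 1) = -(α * (1 - t)) := by ring
      have hu0 : 0 < 1 - t := by linarith
      have hu1 : 1 - t < 1 := by linarith
      have hQ := hexpQ hu0 hu1
      have hB1nn : 0 ≤ (1 + α) * t + (1 - α) := by nlinarith
      have hBge : (1 + α) * t + (1 - α) ≤ (2 - p) * t + p := by nlinarith
      have hsqle : ((1 + α) * t + (1 - α)) ^ 2 ≤ ((2 - p) * t + p) ^ 2 := by nlinarith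
      have hexpand : ((1 + α) * t + (1 - α)) ^ 2
            - 4 * t * (1 - α * (1 - t) + (α * (1 - t)) ^ 2 / 2 + (2 / 9) * (α * (1 - t)) ^ 3)
          = (2 - (1 + α) ^ 2) * (1 - t) ^ 2 + 2 * α ^ 2 * (1 - t) ^ 3
            - (8 / 9) * α ^ 3 * (1 - t) ^ 3 * (1 - (1 - t)) := by
        ring
      have hpos2 : 0 < (2 - (1 + α) ^ 2) * (1 - t) ^ 2 + 2 * α ^ 2 * (1 - t) ^ 3
          - (8 / 9) * α ^ 3 * (1 - t) ^ 3 * (1 - (1 - t)) := by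
        nlinarith [mul_nonneg (sub_nonneg.mpr h1α2) (sq_nonneg (1 - t)),
          mul_pos (mul_pos hα0 hα0) (mul_pos (mul_pos hu0 hu0) hu0),
          mul_nonneg (mul_nonneg (sub_nonneg.mpr hαlt1.le) (mul_nonneg hα0.le hα0.le))
            (mul_nonneg (mul_nonneg hu0.le hu0.le) hu0.le),
          mul_nonneg (mul_nonneg (mul_nonneg hα0.le (mul_nonneg hα0.le hα0.le))
            (mul_nonneg (mul_nonneg hu0.le hu0.le) hu0.le)) h0t.le]
      have h4t : 4 * t * Real.exp (α * (t - 1))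
          ≤ 4 * t * (1 - α * (1 - t) + (α * (1 - t)) ^ 2 / 2 + (2 / 9) * (α * (1 - t)) ^ 3) := by
        rw [harg]
        exact mul_le_mul_of_nonneg_left hQ (by linarith)
      linarith
    -- the function F t = 2 pgf(t) - B(t) is positive at s₁ = p/4
    have hFs1 : 0 < 2 * pgf μ (p / 4) - ((2 - p) * (p / 4) + p) := by
      have h0 : (0:ℝ) ≤ p / 4 := by linarith
      have h1 : p / 4 ≤ 1 := by linarith
      have hge := hpgf_ge h0 h1
      nlinarith
    -- the point s₂ = 1 - u₀ with u₀ = (p + α - 1)/4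
    set u₀ : ℝ := (p + α - 1) / 4 with hu₀def
    have hu₀0 : 0 < u₀ := by rw [hu₀def]; linarith
    have hu₀14 : u₀ ≤ 1 / 4 := by rw [hu₀def]; linarith
    set s₂ : ℝ := 1 - u₀ with hs₂def
    have hs₂0 : (0:ℝ) < s₂ := by rw [hs₂def]; linarith
    have hs₂1 : s₂ < 1 := by rw [hs₂def]; linarith
    have hs₂34 : 3 / 4 ≤ s₂ := by rw [hs₂def]; linarith
    have hFsq : ∀ t : ℝ, 0 ≤ t → t ≤ 1 →
        (2 * pgf μ t - ((2 - p) * t + p)) ^ 2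
          = ((2 - p) * t + p) ^ 2 - 4 * t * Real.exp (α * (t - 1)) := by
      intro t h0 h1
      have MI := real_MI hα0 hμ h0 h1
      linear_combination (-4) * MI
    -- F s₂ > 0 via IVT and hDpos
    have hFs2pos : 0 < 2 * pgf μ s₂ - ((2 - p) * s₂ + p) := by
      by_contra hno
      push_neg at hno
      have hD2 := hDpos s₂ hs₂0 hs₂1
      have hsq2 := hFsq s₂ hs₂0.le hs₂1.le
      have hFneg : 2 * pgf μ s₂ - ((2 - p) * s₂ + p) < 0 := by
        rcases lt_or_eq_of_le hno with h | h
        · exact h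
        · exfalso; rw [h] at hsq2; simp at hsq2; linarith
      have hple : p / 4 ≤ s₂ := by linarith
      have hcontF : ContinuousOn (fun t => 2 * pgf μ t - ((2 - p) * t + p))
          (Set.Icc (p / 4) s₂) := by
        have hg : ContinuousOn (pgf μ) (Set.Icc (p / 4) s₂) :=
          (hcont (by linarith) hs₂1).mono (Set.Icc_subset_Icc (by linarith) le_rfl)
        exact ((continuousOn_const.mul hg).sub
          ((continuousOn_const.mul continuousOn_id).add continuousOn_const))
      have hivt := intermediate_value_Icc' hple hcontF
      have h0mem : (0:ℝ) ∈ Set.Icc (2 * pgf μ s₂ - ((2 - p) * s₂ + p))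
          (2 * pgf μ (p / 4) - ((2 - p) * (p / 4) + p)) := ⟨hFneg.le, hFs1.le⟩
      obtain ⟨c, hcmem, hc0⟩ := hivt h0mem
      have hc1 : 0 < c := lt_of_lt_of_le (by linarith) hcmem.1
      have hc2 : c < 1 := lt_of_le_of_lt hcmem.2 hs₂1
      have hDc := hDpos c hc1 hc2
      have hsqc := hFsq c hc1.le hc2.le
      have hc0' : 2 * pgf μ c - ((2 - p) * c + p) = 0 := hc0
      rw [hc0'] at hsqc
      simp at hsqc
      linarith
    -- chord upper bound at s₂
    have hch := hchord hs₂0.le hs₂1.le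
    have hFub : 2 * pgf μ s₂ - ((2 - p) * s₂ + p) ≤ p * u₀ := by
      have hr : 2 * (s₂ + (1 - s₂) * p) - ((2 - p) * s₂ + p) = p * u₀ := by
        rw [hs₂def]; ring
      linarith
    have hFub2 : (2 * pgf μ s₂ - ((2 - p) * s₂ + p)) ^ 2 ≤ (p * u₀) ^ 2 := by
      nlinarith [hFs2pos, hFub]
    -- lower bound on D(s₂)
    have harg2 : α * (s₂ - 1) = -(α * u₀) := by rw [hs₂def]; ring
    have hQ2 := hexpQ hu₀0 (by linarith : u₀ < 1)
    have h4t2 : 4 * s₂ * Real.exp (α * (s₂ - 1))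
        ≤ 4 * s₂ * (1 - α * u₀ + (α * u₀) ^ 2 / 2 + (2 / 9) * (α * u₀) ^ 3) := by
      rw [harg2]
      exact mul_le_mul_of_nonneg_left hQ2 (by linarith)
    have hexpand2 : ((2 - p) * s₂ + p) ^ 2
          - 4 * s₂ * (1 - α * u₀ + (α * u₀) ^ 2 / 2 + (2 / 9) * (α * u₀) ^ 3)
        = 4 * u₀ * (p + α - 1) + u₀ ^ 2 * ((2 - p) ^ 2 - 4 * α - 2 * α ^ 2)
          + 2 * α ^ 2 * u₀ ^ 3 - (8 / 9) * α ^ 3 * u₀ ^ 3 * (1 - u₀) := by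
      rw [hs₂def]; ring
    have hδ4 : p + α - 1 = 4 * u₀ := by rw [hu₀def]; ring
    clear_value s₂ u₀
    have hDlb : (p * u₀) ^ 2 < ((2 - p) * s₂ + p) ^ 2 - 4 * s₂ * Real.exp (α * (s₂ - 1)) := by
      have h2plb : 1 ≤ (2 - p) ^ 2 := by
        linarith only [mul_nonneg (sub_nonneg.mpr hp1) (by linarith : (0:ℝ) ≤ 3 - p), sq_nonneg (2 - p), sq_nonneg p, hp0, hp1]
      have hα3 : α ^ 3 ≤ 1 := pow_le_one₀ hα0.le hαlt1.le
      have hαsq : α ^ 2 ≤ 1 := pow_le_one₀ hα0.le hαlt1.le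
      have e1 : α ^ 3 * u₀ ^ 3 ≤ u₀ ^ 3 := by
        have h := mul_le_mul_of_nonneg_right hα3 (pow_nonneg hu₀0.le 3)
        linarith only [h]
      have e2 : α ^ 3 * u₀ ^ 3 * (1 - u₀) ≤ α ^ 3 * u₀ ^ 3 * 1 :=
        mul_le_mul_of_nonneg_left (by linarith only [hu₀0]) (by positivity)
      have c1 : α ^ 3 * u₀ ^ 3 * (1 - u₀) ≤ u₀ ^ 3 := by linarith only [e1, e2]
      have c2 : u₀ ^ 3 ≤ u₀ ^ 2 / 4 := by
        have h := mul_le_mul_of_nonneg_left hu₀14 (sq_nonneg u₀)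
        calc u₀ ^ 3 = u₀ ^ 2 * u₀ := by ring
        _ ≤ u₀ ^ 2 * (1 / 4) := h
        _ = u₀ ^ 2 / 4 := by ring
      have hcub : (8 / 9) * α ^ 3 * u₀ ^ 3 * (1 - u₀) ≤ u₀ ^ 2 := by
        linarith only [c1, c2, sq_nonneg u₀]
      have hA : 4 * u₀ * (p + α - 1) = 16 * u₀ ^ 2 := by rw [hδ4]; ring
      have hC : -5 ≤ (2 - p) ^ 2 - 4 * α - 2 * α ^ 2 := by
        linarith only [h2plb, hαsq, hαlt1, hα0]
      have hCmul : u₀ ^ 2 * (-5) ≤ u₀ ^ 2 * ((2 - p) ^ 2 - 4 * α - 2 * α ^ 2) :=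
        mul_le_mul_of_nonneg_left hC (sq_nonneg u₀)
      have hcube_pos : 0 ≤ 2 * α ^ 2 * u₀ ^ 3 := by positivity
      have hp2 : p ^ 2 ≤ 1 := pow_le_one₀ hp0.le hp1
      have hpu : (p * u₀) ^ 2 ≤ u₀ ^ 2 := by
        calc (p * u₀) ^ 2 = p ^ 2 * u₀ ^ 2 := by ring
        _ ≤ 1 * u₀ ^ 2 := mul_le_mul_of_nonneg_right hp2 (sq_nonneg u₀)
        _ = u₀ ^ 2 := one_mul _
      have husq : 0 < u₀ ^ 2 := by positivity
      linarith only [h4t2, hexpand2, hA, hCmul, hcube_pos, hcub, hpu, husq]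
    have hsq2 := hFsq s₂ hs₂0.le hs₂1.le
    linarith only [hFub2, hDlb, hsq2]
end

section
/- Let 0 < α ≤ √2 − 1. Then any ℕ-valued random variable X satisfying the recursive distributional equation has E[X] = (1/2)(1 + α − √(1 − 2α − α²)), where E[X] := ∑_{k≥0} k·P(X = k). -/
open scoped ENNReal

open Real Set Filter
open scoped Topology

lemma tsum_antidiag (F : ℕ → ℕ → ℝ≥0∞) :
    ∑' k, ∑ j ∈ Finset.range (k + 1), F j (k - j) = ∑' i, ∑' j, F i j := by
  have h1 : ∀ k : ℕ, ∑ j ∈ Finset.range (k + 1), F j (k - j)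
      = ∑' j : ℕ, if j ≤ k then F j (k - j) else 0 := by
    intro k
    rw [tsum_eq_sum (s := Finset.range (k + 1))]
    · exact Finset.sum_congr rfl fun j hj => by
        simp [Nat.lt_succ_iff.mp (Finset.mem_range.mp hj)]
    · intro b hb
      have : ¬ b ≤ k := by
        intro h; exact hb (Finset.mem_range.mpr (Nat.lt_succ_iff.mpr h))
      simp [this]
  simp_rw [h1]
  rw [ENNReal.tsum_comm]
  refine tsum_congr fun j => ?_
  have hinj : Function.Injective (fun i : ℕ => j + i) := fun a b h => by
    simpa using h
  rw [← Function.Injective.tsum_eq hinj]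
  · refine tsum_congr fun i => ?_
    simp
  · intro k hk
    rcases le_or_gt j k with h | h
    · exact ⟨k - j, by simp [Nat.add_sub_cancel' h]⟩
    · simp only [Function.mem_support, ne_eq] at hk
      exfalso; exact hk (by simp [h.not_ge])

noncomputable def PG (f : ℕ → ℝ≥0∞) (x : ℝ≥0∞) : ℝ≥0∞ := ∑' k, f k * x ^ k

lemma PG_conv (f g : ℕ → ℝ≥0∞) (x : ℝ≥0∞) :
    PG (convAdd f g) x = PG f x * PG g x := by
  unfold PG convAdd
  have : ∀ k : ℕ, (∑ j ∈ Finset.range (k + 1), f j * g (k - j)) * x ^ k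
      = ∑ j ∈ Finset.range (k + 1), (f j * x ^ j) * (g (k - j) * x ^ (k - j)) := by
    intro k
    rw [Finset.sum_mul]
    refine Finset.sum_congr rfl fun j hj => ?_
    have hj' : j ≤ k := Nat.lt_succ_iff.mp (Finset.mem_range.mp hj)
    have : x ^ k = x ^ j * x ^ (k - j) := by
      rw [← pow_add, Nat.add_sub_cancel' hj']
    rw [this]; ring
  simp_rw [this]
  rw [tsum_antidiag (fun i j => (f i * x ^ i) * (g j * x ^ j))]
  calc ∑' (i : ℕ) (j : ℕ), f i * x ^ i * (g j * x ^ j)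
      = ∑' (i : ℕ), (f i * x ^ i) * ∑' (j : ℕ), g j * x ^ j := by
        exact tsum_congr fun i => ENNReal.tsum_mul_left
    _ = (∑' k, f k * x ^ k) * ∑' k, g k * x ^ k := ENNReal.tsum_mul_right

lemma PG_iter (f : ℕ → ℝ≥0∞) (x : ℝ≥0∞) (n : ℕ) :
    PG (iterConv f n) x = (PG f x) ^ n := by
  induction n with
  | zero =>
    simp only [iterConv, PG, pow_zero]
    rw [tsum_eq_single 0]
    · simp
    · intro b hb; simp [hb]
  | succ n ih => rw [iterConv, PG_conv, ih, pow_succ]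


lemma mass_conv (f g : ℕ → ℝ≥0∞) :
    ∑' k, convAdd f g k = (∑' k, f k) * (∑' k, g k) := by
  unfold convAdd
  rw [tsum_antidiag (fun i j => f i * g j)]
  calc ∑' (i : ℕ) (j : ℕ), f i * g j
      = ∑' (i : ℕ), f i * ∑' j, g j := tsum_congr fun i => ENNReal.tsum_mul_left
    _ = _ := ENNReal.tsum_mul_right

lemma mean_conv (f g : ℕ → ℝ≥0∞) :
    ∑' k : ℕ, (k : ℝ≥0∞) * convAdd f g k
      = (∑' k : ℕ, (k : ℝ≥0∞) * f k) * (∑' k, g k) + (∑' k, f k) * (∑' k : ℕ, (k : ℝ≥0∞) * g k) := by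
  unfold convAdd
  have h : ∀ k : ℕ, (k : ℝ≥0∞) * ∑ j ∈ Finset.range (k + 1), f j * g (k - j)
      = ∑ j ∈ Finset.range (k + 1),
        (((j : ℝ≥0∞) * f j) * g (k - j) + f j * (((k - j : ℕ) : ℝ≥0∞) * g (k - j))) := by
    intro k
    rw [Finset.mul_sum]
    refine Finset.sum_congr rfl fun j hj => ?_
    have hj' : j ≤ k := Nat.lt_succ_iff.mp (Finset.mem_range.mp hj)
    have : (k : ℝ≥0∞) = (j : ℝ≥0∞) + ((k - j : ℕ) : ℝ≥0∞) := by
      rw [← Nat.cast_add, Nat.add_sub_cancel' hj']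
    rw [this]; ring
  simp_rw [h]
  rw [tsum_antidiag (fun i j => ((i : ℝ≥0∞) * f i) * g j + f i * ((j : ℝ≥0∞) * g j))]
  calc ∑' (i : ℕ) (j : ℕ), (((i : ℝ≥0∞) * f i) * g j + f i * ((j : ℝ≥0∞) * g j))
      = ∑' (i : ℕ), (((i : ℝ≥0∞) * f i) * ∑' j, g j + f i * ∑' j : ℕ, (j : ℝ≥0∞) * g j) := by
        refine tsum_congr fun i => ?_
        rw [ENNReal.tsum_add, ENNReal.tsum_mul_left, ENNReal.tsum_mul_left]
    _ = _ := by
        rw [ENNReal.tsum_add, ENNReal.tsum_mul_right, ENNReal.tsum_mul_right]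

lemma mass_iter (f : ℕ → ℝ≥0∞) (hf : ∑' k, f k = 1) (n : ℕ) :
    ∑' k, iterConv f n k = 1 := by
  induction n with
  | zero =>
    rw [tsum_eq_single 0]
    · simp [iterConv]
    · intro b hb; simp [iterConv, hb]
  | succ n ih => rw [iterConv, mass_conv, ih, hf, one_mul]

lemma mean_iter (f : ℕ → ℝ≥0∞) (hf : ∑' k, f k = 1) (n : ℕ) :
    ∑' k : ℕ, (k : ℝ≥0∞) * iterConv f n k = n * ∑' k : ℕ, (k : ℝ≥0∞) * f k := by
  induction n with
  | zero =>
    rw [tsum_eq_single 0]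
    · simp [iterConv]
    · intro b hb; simp [iterConv, hb]
  | succ n ih =>
    rw [iterConv, mean_conv, ih, hf, mass_iter f hf n]
    push_cast
    ring


lemma tsum_shift (f : ℕ → ℝ≥0∞) : ∑' k, f k = f 0 + ∑' k, f (k + 1) :=
  tsum_eq_zero_add' ENNReal.summable

section RDE
variable {α : ℝ} {μ : ℕ → ℝ≥0∞}

lemma mass_shift (hμ : SatisfiesRDE α μ) : ∑' k, shiftLaw μ k = 1 := by
  have h1 : ∑' k, shiftLaw μ k = (μ 0 + μ 1) + ∑' k : ℕ, μ (k + 2) := by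
    rw [tsum_shift (shiftLaw μ)]
    have e0 : shiftLaw μ 0 = μ 0 + μ 1 := by simp [shiftLaw]
    have e1 : ∀ k, shiftLaw μ (k + 1) = μ (k + 2) := fun k => by simp [shiftLaw]
    simp_rw [e0, e1]
  have h2 : (1 : ℝ≥0∞) = μ 0 + (μ 1 + ∑' k : ℕ, μ (k + 2)) := by
    rw [← hμ.1, tsum_shift μ, tsum_shift (fun k => μ (k + 1))]
  rw [h1, h2, add_assoc]

lemma PG_funEq (hμ : SatisfiesRDE α μ) (x : ℝ≥0∞) :
    PG μ x = ∑' n, geomHalf n *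
      (PG (poissonPMF α) x * (PG (shiftLaw μ) x) ^ n) := by
  have : PG μ x = ∑' k, (∑' n, geomHalf n *
      convAdd (poissonPMF α) (iterConv (shiftLaw μ) n) k) * x ^ k := by
    unfold PG
    exact tsum_congr fun k => by rw [← hμ.2 k]
  rw [this]
  have : ∀ k : ℕ, (∑' n, geomHalf n * convAdd (poissonPMF α) (iterConv (shiftLaw μ) n) k) * x ^ k
      = ∑' n, geomHalf n * (convAdd (poissonPMF α) (iterConv (shiftLaw μ) n) k * x ^ k) := by
    intro k
    rw [← ENNReal.tsum_mul_right]
    exact tsum_congr fun n => by ring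
  simp_rw [this]
  rw [ENNReal.tsum_comm]
  refine tsum_congr fun n => ?_
  rw [ENNReal.tsum_mul_left]
  congr 1
  rw [← PG_iter, ← PG_conv]
  rfl

lemma geom_id (y : ℝ≥0∞) : 2 * (∑' n, geomHalf n * y ^ n) = 1 + y * ∑' n, geomHalf n * y ^ n := by
  have h2 : (2 : ℝ≥0∞) * (1 / 2) = 1 := by
    rw [one_div, ENNReal.mul_inv_cancel] <;> norm_num
  calc 2 * (∑' n, geomHalf n * y ^ n) = ∑' n : ℕ, (1 / 2) ^ n * y ^ n := by
        rw [← ENNReal.tsum_mul_left]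
        refine tsum_congr fun n => ?_
        unfold geomHalf
        rw [pow_succ, ← mul_assoc, ← mul_assoc, mul_comm (2 : ℝ≥0∞) ((1/2 : ℝ≥0∞) ^ n),
          mul_assoc ((1/2 : ℝ≥0∞) ^ n), h2, mul_one]
    _ = 1 + ∑' n : ℕ, (1 / 2) ^ (n + 1) * y ^ (n + 1) := by
        rw [tsum_shift (fun n => (1 / 2 : ℝ≥0∞) ^ n * y ^ n)]
        simp
    _ = 1 + y * ∑' n, geomHalf n * y ^ n := by
        congr 1
        rw [← ENNReal.tsum_mul_left]
        refine tsum_congr fun n => ?_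
        unfold geomHalf
        rw [pow_succ y]
        ring

lemma funEq (hμ : SatisfiesRDE α μ) (x : ℝ≥0∞) :
    2 * PG μ x = PG (poissonPMF α) x + PG (shiftLaw μ) x * PG μ x := by
  set P := PG (poissonPMF α) x
  set H := PG (shiftLaw μ) x
  have hG : PG μ x = P * ∑' n, geomHalf n * H ^ n := by
    rw [PG_funEq hμ x, ← ENNReal.tsum_mul_left]
    exact tsum_congr fun n => by ring
  rw [hG, ← mul_assoc, mul_comm (2:ℝ≥0∞) P, mul_assoc, geom_id H, mul_add, mul_one]
  ring

lemma shift_id (μ : ℕ → ℝ≥0∞) (x : ℝ≥0∞) :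
    PG μ x + μ 0 * x = x * PG (shiftLaw μ) x + μ 0 := by
  have hG : PG μ x = μ 0 + (μ 1 * x + ∑' k : ℕ, μ (k + 2) * x ^ (k + 2)) := by
    unfold PG
    rw [tsum_shift (fun k => μ k * x ^ k)]
    simp only [pow_zero, mul_one]
    congr 1
    rw [tsum_shift (fun k => μ (k + 1) * x ^ (k + 1))]
    simp
  have hH : x * PG (shiftLaw μ) x
      = (μ 0 + μ 1) * x + ∑' k : ℕ, μ (k + 2) * x ^ (k + 2) := by
    unfold PG
    rw [tsum_shift (fun k => shiftLaw μ k * x ^ k)]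
    have e0 : shiftLaw μ 0 = μ 0 + μ 1 := by simp [shiftLaw]
    have e1 : ∀ k, shiftLaw μ (k + 1) = μ (k + 2) := fun k => by simp [shiftLaw]
    simp_rw [e0, e1, pow_zero, mul_one, mul_add, ← ENNReal.tsum_mul_left]
    congr 1
    · ring
    · refine tsum_congr fun k => ?_
      rw [pow_succ x (k + 1)]
      ring
  rw [hG, hH]
  ring

end RDE


lemma PG_poisson (α : ℝ) (hα : 0 ≤ α) {s : ℝ} (hs : 0 ≤ s) :
    PG (poissonPMF α) (ENNReal.ofReal s) = ENNReal.ofReal (Real.exp (α * (s - 1))) := by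
  unfold PG poissonPMF
  have hterm : ∀ k : ℕ, ENNReal.ofReal (Real.exp (-α) * α ^ k / (Nat.factorial k))
      * (ENNReal.ofReal s) ^ k
      = ENNReal.ofReal (Real.exp (-α) * (α * s) ^ k / (Nat.factorial k)) := by
    intro k
    rw [← ENNReal.ofReal_pow hs, ← ENNReal.ofReal_mul (by positivity)]
    congr 1
    rw [mul_pow]
    ring
  simp_rw [hterm]
  have hdm : ∀ k : ℕ, Real.exp (-α) * (α * s) ^ k / (Nat.factorial k)
      = Real.exp (-α) * ((α * s) ^ k / (Nat.factorial k)) := fun k => by ring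
  simp_rw [hdm]
  rw [← ENNReal.ofReal_tsum_of_nonneg (fun k => by positivity)
    ((Real.summable_pow_div_factorial (α * s)).mul_left _)]
  congr 1
  rw [tsum_mul_left]
  rw [show (∑' k : ℕ, (α * s) ^ k / (Nat.factorial k)) = Real.exp (α * s) by
    rw [Real.exp_eq_exp_ℝ, NormedSpace.exp_eq_tsum_div]]
  rw [← Real.exp_add]
  congr 1
  ring

lemma PG_le_one {f : ℕ → ℝ≥0∞} (hf : ∑' k, f k = 1) {x : ℝ≥0∞} (hx : x ≤ 1) :
    PG f x ≤ 1 := by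
  calc PG f x ≤ ∑' k, f k := by
        refine ENNReal.tsum_le_tsum fun k => ?_
        calc f k * x ^ k ≤ f k * 1 := by
              exact mul_le_mul_right (pow_le_one' hx k) (f k)
          _ = f k := mul_one _
    _ = 1 := hf

lemma pgf_toReal {μ : ℕ → ℝ≥0∞} (hfin : ∀ k, μ k ≠ ⊤) {s : ℝ} (hs : 0 ≤ s) :
    (PG μ (ENNReal.ofReal s)).toReal = pgf μ s := by
  unfold PG pgf
  rw [ENNReal.tsum_toReal_eq]
  · refine tsum_congr fun k => ?_
    rw [ENNReal.toReal_mul, ← ENNReal.ofReal_pow hs, ENNReal.toReal_ofReal (by positivity)]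
  · intro k
    exact ENNReal.mul_ne_top (hfin k) (ENNReal.pow_ne_top ENNReal.ofReal_ne_top)


section Real
variable {α : ℝ} {μ : ℕ → ℝ≥0∞}

lemma mu_le_one (hμ : SatisfiesRDE α μ) (k : ℕ) : μ k ≤ 1 := hμ.1 ▸ ENNReal.le_tsum k

lemma mu_ne_top (hμ : SatisfiesRDE α μ) (k : ℕ) : μ k ≠ ⊤ :=
  fun h => by simpa [h] using mu_le_one hμ k

/-- The quadratic ENNReal identity. -/
lemma quadENN (hμ : SatisfiesRDE α μ) (x : ℝ≥0∞) :
    2 * x * PG μ x + μ 0 * PG μ x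
      = x * PG (poissonPMF α) x + PG μ x * PG μ x + μ 0 * x * PG μ x := by
  set G := PG μ x
  set H := PG (shiftLaw μ) x
  set P := PG (poissonPMF α) x
  have h1 : 2 * x * G = x * P + (x * H) * G := by
    calc 2 * x * G = x * (2 * G) := by ring
      _ = x * (P + H * G) := by rw [funEq hμ x]
      _ = x * P + (x * H) * G := by ring
  have h2 : G * G + μ 0 * x * G = (x * H) * G + μ 0 * G := by
    calc G * G + μ 0 * x * G = (G + μ 0 * x) * G := by ring
      _ = (x * H + μ 0) * G := by rw [shift_id μ x]
      _ = (x * H) * G + μ 0 * G := by ring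
  calc 2 * x * G + μ 0 * G = (x * P + (x * H) * G) + μ 0 * G := by rw [h1]
    _ = x * P + ((x * H) * G + μ 0 * G) := by ring
    _ = x * P + (G * G + μ 0 * x * G) := by rw [← h2]
    _ = x * P + G * G + μ 0 * x * G := by ring

/-- The real quadratic identity. -/
lemma quadReal (hα : 0 < α) (hμ : SatisfiesRDE α μ) {s : ℝ} (hs0 : 0 ≤ s) (hs1 : s ≤ 1) :
    (2 * pgf μ s - (2 * s + (μ 0).toReal * (1 - s))) ^ 2
      = (2 * s + (μ 0).toReal * (1 - s)) ^ 2 - 4 * s * Real.exp (α * (s - 1)) := by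
  set x := ENNReal.ofReal s with hxdef
  have hx1 : x ≤ 1 := by
    rw [hxdef, ← ENNReal.ofReal_one]
    exact ENNReal.ofReal_le_ofReal hs1
  have hxt : x ≠ ⊤ := ENNReal.ofReal_ne_top
  have hGle : PG μ x ≤ 1 := PG_le_one hμ.1 hx1
  have hGt : PG μ x ≠ ⊤ := fun h => by simpa [h] using hGle
  have hPt : PG (poissonPMF α) x ≠ ⊤ := by
    rw [hxdef, PG_poisson α hα.le hs0]; exact ENNReal.ofReal_ne_top
  have hμ0 : μ 0 ≠ ⊤ := mu_ne_top hμ 0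
  have h := congrArg ENNReal.toReal (quadENN hμ x)
  have hxr : x.toReal = s := ENNReal.toReal_ofReal hs0
  have hgr : (PG μ x).toReal = pgf μ s := pgf_toReal (mu_ne_top hμ) hs0
  have hPr : (PG (poissonPMF α) x).toReal = Real.exp (α * (s - 1)) := by
    rw [hxdef, PG_poisson α hα.le hs0, ENNReal.toReal_ofReal (Real.exp_pos _).le]
  have h2t : (2 : ℝ≥0∞) ≠ ⊤ := by norm_num
  have f1 : 2 * x * PG μ x ≠ ⊤ := ENNReal.mul_ne_top (ENNReal.mul_ne_top h2t hxt) hGt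
  have f2 : μ 0 * PG μ x ≠ ⊤ := ENNReal.mul_ne_top hμ0 hGt
  have f3 : x * PG (poissonPMF α) x ≠ ⊤ := ENNReal.mul_ne_top hxt hPt
  have f4 : PG μ x * PG μ x ≠ ⊤ := ENNReal.mul_ne_top hGt hGt
  have f5 : μ 0 * x * PG μ x ≠ ⊤ := ENNReal.mul_ne_top (ENNReal.mul_ne_top hμ0 hxt) hGt
  rw [ENNReal.toReal_add f1 f2, ENNReal.toReal_add (ENNReal.add_ne_top.mpr ⟨f3, f4⟩) f5,
    ENNReal.toReal_add f3 f4] at h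
  simp only [ENNReal.toReal_mul, hxr, hgr, hPr, ENNReal.toReal_ofNat] at h
  nlinarith [h]
end Real


/-- Key inequality. -/
lemma key_ineq {α : ℝ} (hα0 : 0 < α) (hα1 : α ≤ Real.sqrt 2 - 1) {s : ℝ}
    (hs0 : 0 < s) (hs1 : s < 1) :
    4 * s * Real.exp (α * (s - 1)) < ((1 - α) + (1 + α) * s) ^ 2 := by
  have hsq : (1 + α) ^ 2 ≤ 2 := by
    have h2 : (1 : ℝ) ≤ 2 := by norm_num
    have : 1 + α ≤ Real.sqrt 2 := by linarith
    calc (1 + α) ^ 2 ≤ (Real.sqrt 2) ^ 2 := by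
          apply pow_le_pow_left₀ (by positivity) this
      _ = 2 := Real.sq_sqrt (by norm_num)
  have hαlt1 : α < 1 := by nlinarith
  set A : ℝ → ℝ := fun x => (1 - α) + (1 + α) * x with hA
  have hApos : ∀ x : ℝ, 0 < x → 0 < A x := fun x hx => by
    simp only [hA]; nlinarith
  set h : ℝ → ℝ := fun x => 2 * Real.log (A x) - Real.log (4 * x) - α * (x - 1) with hh
  have hderiv : ∀ x ∈ Ioo (0:ℝ) 1, HasDerivAt h
      (2 * ((1 + α) / A x) - 1 / x - α) x := by
    intro x hx
    have hx0 := hx.1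
    have hA0 := hApos x hx0
    have d1 : HasDerivAt (fun y => Real.log (A y)) ((1 + α) / A x) x := by
      have : HasDerivAt A (1 + α) x := by
        exact (((hasDerivAt_id x).const_mul (1 + α)).const_add (1 - α)).congr_deriv (mul_one _)
      simpa [div_eq_mul_inv, mul_comm, Function.comp_def] using (Real.hasDerivAt_log hA0.ne').comp x this
    have d2 : HasDerivAt (fun y => Real.log (4 * y)) (1 / x) x := by
      have : HasDerivAt (fun y : ℝ => 4 * y) 4 x := by
        simpa using (hasDerivAt_id x).const_mul (4:ℝ)
      have := this.log (by positivity : (4:ℝ) * x ≠ 0)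
      convert this using 1
      field_simp
    have d3 : HasDerivAt (fun y : ℝ => α * (y - 1)) α x := by
      simpa using ((hasDerivAt_id x).sub_const 1).const_mul α
    simpa using ((d1.const_mul 2).fun_sub d2).fun_sub d3
  have hanti : StrictAntiOn h (Ioc (0:ℝ) 1) := by
    apply strictAntiOn_of_deriv_neg (convex_Ioc 0 1)
    · apply ContinuousOn.sub
      apply ContinuousOn.sub
      · apply ContinuousOn.mul continuousOn_const
        apply ContinuousOn.log
        · fun_prop
        · intro x hx; exact (hApos x hx.1).ne'
      · apply ContinuousOn.log
        · fun_prop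
        · intro x hx
          have : (0:ℝ) < 4 * x := by nlinarith [hx.1]
          exact this.ne'
      · fun_prop
    · intro x hx
      rw [interior_Ioc] at hx
      rw [(hderiv x hx).deriv]
      have hx0 := hx.1
      have hx1 := hx.2
      have hA0 := hApos x hx0
      have key : 2 * (1 + α) * x - A x - α * x * A x < 0 := by
        have hfac : 2 * (1 + α) * x - A x - α * x * A x
            = -(1 - x) * ((1 - α) - α * (1 + α) * x) := by
          simp only [hA]; ring
        rw [hfac]
        have : 0 < (1 - α) - α * (1 + α) * x := by nlinarith
        nlinarith
      have : 2 * ((1 + α) / A x) - 1 / x - α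
          = (2 * (1 + α) * x - A x - α * x * A x) / (x * A x) := by
        field_simp
      rw [this]
      exact div_neg_of_neg_of_pos key (by positivity)
  have h1 : h 1 = 0 := by
    simp only [hh, hA]
    have : (1 - α) + (1 + α) * 1 = 2 := by ring
    rw [this]
    rw [show (4:ℝ) * 1 = 2 ^ 2 by norm_num, Real.log_pow]
    push_cast
    ring
  have hpos : 0 < h s := by
    have := hanti (mem_Ioc.mpr ⟨hs0, hs1.le⟩) (mem_Ioc.mpr ⟨one_pos, le_refl 1⟩) hs1
    rw [h1] at this
    linarith
  have hexp : Real.exp (h s) > 1 := by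
    calc (1:ℝ) = Real.exp 0 := by rw [Real.exp_zero]
      _ < Real.exp (h s) := Real.exp_lt_exp.mpr hpos
  have hAs := hApos s hs0
  have expand : Real.exp (h s) = (A s) ^ 2 / (4 * s * Real.exp (α * (s - 1))) := by
    simp only [hh]
    rw [Real.exp_sub, Real.exp_sub]
    rw [show (2:ℝ) * Real.log (A s) = Real.log ((A s) ^ 2) by
      rw [Real.log_pow]; push_cast; ring]
    rw [Real.exp_log (by positivity), Real.exp_log (by positivity), div_div]
  have h4 : 0 < 4 * s * Real.exp (α * (s - 1)) := by positivity
  rw [expand, gt_iff_lt, lt_div_iff₀ h4, one_mul] at hexp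
  exact hexp

/-- p ≥ 1 - α from nonnegativity of the discriminant near 1. -/
lemma p_ge {α p : ℝ}
    (hD : ∀ s ∈ Icc (0:ℝ) 1, 0 ≤ (2*s + p*(1-s))^2 - 4*s*Real.exp (α*(s-1))) :
    1 - α ≤ p := by
  set D : ℝ → ℝ := fun s => (2*s + p*(1-s))^2 - 4*s*Real.exp (α*(s-1)) with hDdef
  have hD1 : D 1 = 0 := by simp [hDdef]; norm_num
  have hderiv : HasDerivAt D (4*(1 - p - α)) 1 := by
    have d1 : HasDerivAt (fun s : ℝ => (2*s + p*(1-s))^2) (2 * (2 + p*(-1)) * (2*1 + p*(1-1))) 1 := by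
      have hb : HasDerivAt (fun s : ℝ => 2*s + p*(1-s)) (2 + p*(-1)) 1 := by
        have : HasDerivAt (fun s : ℝ => 2*s) 2 1 := by
          simpa using (hasDerivAt_id (1:ℝ)).const_mul (2:ℝ)
        have h2 : HasDerivAt (fun s : ℝ => p*(1-s)) (p*(-1)) 1 := by
          have : HasDerivAt (fun s : ℝ => (1:ℝ)-s) (-1) 1 := by
            simpa using (hasDerivAt_id (1:ℝ)).const_sub 1
          simpa using this.const_mul p
        simpa using this.fun_add h2
      have := hb.fun_pow 2
      exact this.congr_deriv (by ring)
    have d2 : HasDerivAt (fun s : ℝ => 4*s*Real.exp (α*(s-1)))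
        (4*Real.exp (α*(1-1)) + 4*1*(Real.exp (α*(1-1))*α)) 1 := by
      have ha : HasDerivAt (fun s : ℝ => 4*s) 4 1 := by
        simpa using (hasDerivAt_id (1:ℝ)).const_mul (4:ℝ)
      have hb : HasDerivAt (fun s : ℝ => Real.exp (α*(s-1))) (Real.exp (α*(1-1))*α) 1 := by
        have hc : HasDerivAt (fun s : ℝ => α*(s-1)) α 1 := by
          simpa using ((hasDerivAt_id (1:ℝ)).sub_const 1).const_mul α
        simpa [mul_comm, Function.comp_def] using (Real.hasDerivAt_exp (α*(1-1))).comp 1 hc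
      simpa using ha.fun_mul hb
    have := d1.fun_sub d2
    exact this.congr_deriv (by simp only [mul_one, sub_self, mul_zero, Real.exp_zero]; ring)
  have hslope : Filter.Tendsto (fun s => (D s - D 1)/(s - 1)) (𝓝[<] (1:ℝ)) (𝓝 (4*(1-p-α))) := by
    have := hasDerivAt_iff_tendsto_slope.mp hderiv
    have hmono : 𝓝[<] (1:ℝ) ≤ 𝓝[≠] (1:ℝ) :=
      nhdsWithin_mono 1 fun x hx => ne_of_lt hx
    have := this.mono_left hmono
    refine this.congr' ?_
    filter_upwards [self_mem_nhdsWithin] with s hs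
    rw [slope_def_field]
  have hle : 4*(1-p-α) ≤ 0 := by
    refine le_of_tendsto hslope ?_
    filter_upwards [Ioo_mem_nhdsLT_of_mem (by norm_num : (1:ℝ) ∈ Ioc 0 1)] with s hs'
    rw [hD1, sub_zero]
    apply div_nonpos_of_nonneg_of_nonpos
    · exact hD s ⟨hs'.1.le, hs'.2.le⟩
    · linarith [hs'.2]
  linarith


lemma mass_poisson {α : ℝ} (hα : 0 ≤ α) : ∑' k, poissonPMF α k = 1 := by
  have h := PG_poisson α hα (by norm_num : (0:ℝ) ≤ 1)
  rw [ENNReal.ofReal_one] at h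
  simp only [sub_self, mul_zero, Real.exp_zero, ENNReal.ofReal_one] at h
  rw [← h]
  unfold PG
  exact tsum_congr fun k => by simp

lemma mean_poisson {α : ℝ} (hα : 0 ≤ α) :
    ∑' k : ℕ, (k : ℝ≥0∞) * poissonPMF α k = ENNReal.ofReal α := by
  have hterm : ∀ k : ℕ, (k : ℝ≥0∞) * poissonPMF α k
      = ENNReal.ofReal ((k : ℝ) * (Real.exp (-α) * α ^ k / (Nat.factorial k))) := by
    intro k
    unfold poissonPMF
    rw [ENNReal.ofReal_mul (by positivity), ENNReal.ofReal_natCast]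
  simp_rw [hterm]
  have hsum : Summable (fun k : ℕ => (k : ℝ) * (Real.exp (-α) * α ^ k / (Nat.factorial k))) := by
    rw [← summable_nat_add_iff 1]
    have he : ∀ k : ℕ, ((k+1 : ℕ) : ℝ) * (Real.exp (-α) * α ^ (k+1) / (Nat.factorial (k+1)))
        = (α * Real.exp (-α)) * (α ^ k / (Nat.factorial k)) := by
      intro k
      rw [Nat.factorial_succ]
      push_cast
      have h1 : ((k:ℝ) + 1) ≠ 0 := by positivity
      field_simp
      ring
    exact Summable.congr ((Real.summable_pow_div_factorial α).mul_left (α * Real.exp (-α)))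
      fun k => (he k).symm
  rw [← ENNReal.ofReal_tsum_of_nonneg (fun k => by positivity) hsum]
  congr 1
  rw [hsum.tsum_eq_zero_add]
  simp only [Nat.cast_zero, zero_mul, zero_add]
  have he : ∀ k : ℕ, ((k+1 : ℕ) : ℝ) * (Real.exp (-α) * α ^ (k+1) / (Nat.factorial (k+1)))
      = (α * Real.exp (-α)) * (α ^ k / (Nat.factorial k)) := by
    intro k
    rw [Nat.factorial_succ]
    push_cast
    have h1 : ((k:ℝ) + 1) ≠ 0 := by positivity
    field_simp
    ring
  calc ∑' k : ℕ, ((k+1 : ℕ) : ℝ) * (Real.exp (-α) * α ^ (k+1) / (Nat.factorial (k+1)))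
      = ∑' k : ℕ, (α * Real.exp (-α)) * (α ^ k / (Nat.factorial k)) := tsum_congr he
    _ = (α * Real.exp (-α)) * ∑' k : ℕ, (α ^ k / (Nat.factorial k)) := tsum_mul_left
    _ = (α * Real.exp (-α)) * Real.exp α := by
        rw [show (∑' k : ℕ, (α ^ k / (Nat.factorial k))) = Real.exp α by
          rw [Real.exp_eq_exp_ℝ, NormedSpace.exp_eq_tsum_div]]
    _ = α := by rw [mul_assoc, ← Real.exp_add]; simp

lemma geom_mass : ∑' n, geomHalf n = 1 := by
  have : ∀ n : ℕ, geomHalf n = (1/2 : ℝ≥0∞) ^ n * (1/2) := by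
    intro n; rw [geomHalf, pow_succ]
  simp_rw [this]
  rw [ENNReal.tsum_mul_right, ENNReal.tsum_geometric]
  rw [one_div, ENNReal.one_sub_inv_two, inv_inv]
  rw [ENNReal.mul_inv_cancel] <;> norm_num

lemma geom_mean : ∑' n : ℕ, (n : ℝ≥0∞) * geomHalf n = 1 := by
  have hterm : ∀ n : ℕ, (n : ℝ≥0∞) * geomHalf n
      = ENNReal.ofReal ((n : ℝ) * (1/2) ^ (n+1)) := by
    intro n
    rw [geomHalf, ENNReal.ofReal_mul (by positivity), ENNReal.ofReal_natCast,
      ENNReal.ofReal_pow (by norm_num)]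
    congr 2
    rw [ENNReal.ofReal_div_of_pos (by norm_num)]
    norm_num
  simp_rw [hterm]
  have hs : Summable (fun n : ℕ => (n : ℝ) * (1/2) ^ (n+1)) := by
    have h := ((hasSum_coe_mul_geometric_of_norm_lt_one
      (r := (1/2:ℝ)) (by rw [Real.norm_of_nonneg] <;> norm_num)).summable.mul_right (1/2:ℝ))
    refine h.congr fun n => ?_
    rw [pow_succ]; ring
  rw [← ENNReal.ofReal_tsum_of_nonneg (fun n => by positivity) hs]
  have : (∑' n : ℕ, (n : ℝ) * (1/2) ^ (n+1)) = 1 := by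
    have h := tsum_coe_mul_geometric_of_norm_lt_one (r := (1/2:ℝ)) (by rw [Real.norm_of_nonneg] <;> norm_num)
    calc ∑' n : ℕ, (n : ℝ) * (1/2) ^ (n+1)
        = ∑' n : ℕ, ((n : ℝ) * (1/2) ^ n) * (1/2) := by
          refine tsum_congr fun n => ?_; rw [pow_succ]; ring
      _ = (∑' n : ℕ, (n : ℝ) * (1/2) ^ n) * (1/2) := tsum_mul_right
      _ = 1 := by rw [h]; norm_num
  rw [this, ENNReal.ofReal_one]


section M
variable {α : ℝ} {μ : ℕ → ℝ≥0∞}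

lemma mean_shift_rel (μ : ℕ → ℝ≥0∞) :
    meanENN μ = meanENN (shiftLaw μ) + ∑' k : ℕ, μ (k + 1) := by
  have e1 : ∀ k : ℕ, shiftLaw μ (k + 1) = μ (k + 2) := fun k => by simp [shiftLaw]
  have hM' : meanENN (shiftLaw μ) = ∑' k : ℕ, ((k:ℝ≥0∞) + 1) * μ (k + 2) := by
    rw [meanENN, tsum_shift (fun k => (k : ℝ≥0∞) * shiftLaw μ k)]
    simp only [Nat.cast_zero, zero_mul, zero_add]
    refine tsum_congr fun k => ?_
    rw [e1 k]
    push_cast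
    ring
  have hm : meanENN μ = ∑' k : ℕ, ((k:ℝ≥0∞) + 1) * μ (k + 1) := by
    rw [meanENN, tsum_shift (fun k => (k : ℝ≥0∞) * μ k)]
    simp only [Nat.cast_zero, zero_mul, zero_add]
    refine tsum_congr fun k => ?_
    push_cast
    ring
  rw [hm, hM']
  rw [tsum_shift (fun k => ((k:ℝ≥0∞) + 1) * μ (k + 1)),
    tsum_shift (fun k => μ (k + 1))]
  simp only [Nat.cast_zero, zero_add, one_mul]
  have : ∀ k : ℕ, (((k+1:ℕ):ℝ≥0∞) + 1) * μ (k + 1 + 1)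
      = ((k:ℝ≥0∞) + 1) * μ (k + 2) + μ (k + 2) := by
    intro k
    push_cast
    ring_nf
  simp_rw [this]
  rw [ENNReal.tsum_add]
  ring

lemma t_mass (hμ : SatisfiesRDE α μ) : (∑' k : ℕ, μ (k + 1)) + μ 0 = 1 := by
  rw [add_comm, ← tsum_shift μ, hμ.1]

lemma mean_rde (hα : 0 ≤ α) (hμ : SatisfiesRDE α μ) :
    meanENN μ = ENNReal.ofReal α + meanENN (shiftLaw μ) := by
  have h1 : meanENN μ = ∑' n, geomHalf n *
      (∑' k : ℕ, (k : ℝ≥0∞) * convAdd (poissonPMF α) (iterConv (shiftLaw μ) n) k) := by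
    rw [meanENN]
    have : ∀ k : ℕ, (k : ℝ≥0∞) * μ k = ∑' n, geomHalf n *
        ((k : ℝ≥0∞) * convAdd (poissonPMF α) (iterConv (shiftLaw μ) n) k) := by
      intro k
      rw [hμ.2 k, ← ENNReal.tsum_mul_left]
      exact tsum_congr fun n => by ring
    simp_rw [this]
    rw [ENNReal.tsum_comm]
    exact tsum_congr fun n => ENNReal.tsum_mul_left
  rw [h1]
  have h2 : ∀ n : ℕ, (∑' k : ℕ, (k : ℝ≥0∞) * convAdd (poissonPMF α) (iterConv (shiftLaw μ) n) k)
      = ENNReal.ofReal α + n * meanENN (shiftLaw μ) := by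
    intro n
    rw [mean_conv, mean_poisson hα, mass_poisson hα, mass_iter _ (mass_shift hμ) n,
      mean_iter _ (mass_shift hμ) n]
    rw [mul_one, one_mul]
    rfl
  simp_rw [h2]
  have : ∀ n : ℕ, geomHalf n * (ENNReal.ofReal α + n * meanENN (shiftLaw μ))
      = geomHalf n * ENNReal.ofReal α + ((n : ℝ≥0∞) * geomHalf n) * meanENN (shiftLaw μ) := by
    intro n; ring
  simp_rw [this]
  rw [ENNReal.tsum_add, ENNReal.tsum_mul_right, ENNReal.tsum_mul_right, geom_mass, geom_mean,
    one_mul, one_mul]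

lemma mu0_val (hα0 : 0 ≤ α) (hμ : SatisfiesRDE α μ) (hfin : meanENN μ ≠ ⊤) :
    μ 0 = 1 - ENNReal.ofReal α := by
  have h1 := mean_shift_rel μ
  have h2 := mean_rde hα0 hμ
  have hM'fin : meanENN (shiftLaw μ) ≠ ⊤ := by
    intro h
    rw [h1, h] at hfin
    simp at hfin
  have ht : (∑' k : ℕ, μ (k + 1)) = ENNReal.ofReal α := by
    have : meanENN (shiftLaw μ) + (∑' k : ℕ, μ (k + 1))
        = meanENN (shiftLaw μ) + ENNReal.ofReal α := by
      rw [← h1, h2, add_comm]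
    exact (ENNReal.add_right_inj hM'fin).mp this
  have := t_mass hμ
  rw [ht] at this
  rw [← this]
  rw [ENNReal.add_sub_cancel_left ENNReal.ofReal_ne_top]

end M


section A
variable {α : ℝ} {μ : ℕ → ℝ≥0∞}

lemma mass_real (hμ : SatisfiesRDE α μ) : ∑' k, (μ k).toReal = 1 := by
  rw [← ENNReal.tsum_toReal_eq (mu_ne_top hμ), hμ.1, ENNReal.toReal_one]

lemma summable_toReal (hμ : SatisfiesRDE α μ) : Summable fun k => (μ k).toReal := by
  apply ENNReal.summable_toReal
  rw [hμ.1]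
  exact ENNReal.one_ne_top

lemma pgf_zero (μ : ℕ → ℝ≥0∞) : pgf μ 0 = (μ 0).toReal := by
  rw [pgf, tsum_eq_single 0]
  · simp
  · intro b hb; simp [hb, zero_pow hb]

lemma pgf_one (hμ : SatisfiesRDE α μ) : pgf μ 1 = 1 := by
  rw [pgf]
  simp only [one_pow, mul_one]
  exact mass_real hμ

lemma summable_pgf (hμ : SatisfiesRDE α μ) {s : ℝ} (hs0 : 0 ≤ s) (hs1 : s ≤ 1) :
    Summable fun k => (μ k).toReal * s ^ k := by
  refine Summable.of_nonneg_of_le (fun k => by positivity) (fun k => ?_) (summable_toReal hμ)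
  calc (μ k).toReal * s ^ k ≤ (μ k).toReal * 1 := by
        apply mul_le_mul_of_nonneg_left _ ENNReal.toReal_nonneg
        exact pow_le_one₀ hs0 hs1
    _ = _ := mul_one _

lemma pgf_contOn (hμ : SatisfiesRDE α μ) : ContinuousOn (pgf μ) (Icc (0:ℝ) 1) := by
  apply continuousOn_tsum (u := fun k => (μ k).toReal)
  · intro k; fun_prop
  · exact summable_toReal hμ
  · intro k s hs
    rw [norm_mul, norm_pow]
    calc ‖(μ k).toReal‖ * ‖s‖ ^ k ≤ ‖(μ k).toReal‖ * 1 := by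
          apply mul_le_mul_of_nonneg_left _ (norm_nonneg _)
          apply pow_le_one₀ (norm_nonneg s)
          rw [Real.norm_eq_abs, abs_le]
          exact ⟨by linarith [hs.1], hs.2⟩
      _ = (μ k).toReal := by rw [mul_one, Real.norm_eq_abs, abs_of_nonneg ENNReal.toReal_nonneg]

lemma mu0_pos (hα : 0 < α) (hμ : SatisfiesRDE α μ) : 0 < (μ 0).toReal := by
  apply ENNReal.toReal_pos _ (mu_ne_top hμ 0)
  have hle : geomHalf 0 * convAdd (poissonPMF α) (iterConv (shiftLaw μ) 0) 0 ≤ μ 0 := by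
    rw [hμ.2 0]
    exact ENNReal.le_tsum 0
  have hval : convAdd (poissonPMF α) (iterConv (shiftLaw μ) 0) 0
      = ENNReal.ofReal (Real.exp (-α)) := by
    rw [convAdd, Finset.sum_range_one]
    simp only [iterConv, if_pos rfl, mul_one]
    rw [poissonPMF]
    norm_num
  intro h0
  rw [h0, nonpos_iff_eq_zero] at hle
  rw [hval] at hle
  have : geomHalf 0 ≠ 0 := by rw [geomHalf]; norm_num
  rcases mul_eq_zero.mp hle with h | h
  · exact this h
  · rw [ENNReal.ofReal_eq_zero] at h
    linarith [Real.exp_pos (-α)]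

/-- φ is positive on [0,1). -/
lemma phi_pos (hα : 0 < α) (hα1 : α ≤ Real.sqrt 2 - 1) (hμ : SatisfiesRDE α μ) :
    ∀ s ∈ Ico (0:ℝ) 1, 0 < 2 * pgf μ s - (2 * s + (μ 0).toReal * (1 - s)) := by
  set p := (μ 0).toReal with hp
  have hppos : 0 < p := mu0_pos hα hμ
  have hpge : 1 - α ≤ p := by
    apply p_ge (α := α)
    intro s hs
    rw [← quadReal hα hμ hs.1 hs.2]
    positivity
  have hDpos : ∀ s ∈ Ioo (0:ℝ) 1, 0 < (2*s + p*(1-s))^2 - 4*s*Real.exp (α*(s-1)) := by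
    intro s hs
    have hk := key_ineq hα hα1 hs.1 hs.2
    have hA : (1 - α) + (1 + α) * s ≤ 2*s + p*(1-s) := by nlinarith [hs.2]
    have hApos : 0 < (1 - α) + (1 + α) * s := by nlinarith [Real.sq_sqrt (by norm_num : (2:ℝ) ≥ 0), Real.sqrt_nonneg 2, hs.1]
    nlinarith
  set φ : ℝ → ℝ := fun s => 2 * pgf μ s - (2 * s + p * (1 - s)) with hφ
  have hφ0 : φ 0 = p := by
    simp only [hφ, pgf_zero, mul_zero, zero_add, sub_zero, mul_one]
    rw [← hp]; ring
  have hφcont : ContinuousOn φ (Icc (0:ℝ) 1) := by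
    apply ContinuousOn.sub
    · exact (pgf_contOn hμ).const_smul (2:ℝ) |>.congr fun x _ => by simp [smul_eq_mul]
    · fun_prop
  intro s hs
  by_contra hneg
  push_neg at hneg
  rcases eq_or_lt_of_le (hs.1) with h0 | h0
  · have : φ 0 ≤ 0 := by rw [← h0] at hneg; exact hneg
    rw [hφ0] at this
    linarith
  · -- s ∈ (0,1), φ s ≤ 0; but φ s ≠ 0 since φ s ^ 2 = D s > 0
    have hD := hDpos s ⟨h0, hs.2⟩
    have hsq : φ s ^ 2 = (2*s + p*(1-s))^2 - 4*s*Real.exp (α*(s-1)) :=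
      quadReal hα hμ hs.1 hs.2.le
    have hφne : φ s ≠ 0 := by
      intro h
      rw [h] at hsq
      simp at hsq
      linarith
    have hφneg : φ s < 0 := lt_of_le_of_ne hneg hφne
    -- IVT on [0, s]
    have hsub : Icc (0:ℝ) s ⊆ Icc (0:ℝ) 1 := Icc_subset_Icc le_rfl hs.2.le
    have := intermediate_value_Icc' (le_of_lt h0) (hφcont.mono hsub)
    have h0mem : (0:ℝ) ∈ Icc (φ s) (φ 0) := by
      rw [hφ0]
      exact ⟨hφneg.le, hppos.le⟩
    obtain ⟨c, hc, hφc⟩ := this h0mem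
    have hc0 : c ≠ 0 := by
      intro h
      rw [h, hφ0] at hφc
      linarith
    have hcIoo : c ∈ Ioo (0:ℝ) 1 := ⟨lt_of_le_of_ne hc.1 (Ne.symm hc0), lt_of_le_of_lt hc.2 hs.2⟩
    have hDc := hDpos c hcIoo
    have hsqc : φ c ^ 2 = (2*c + p*(1-c))^2 - 4*c*Real.exp (α*(c-1)) :=
      quadReal hα hμ hcIoo.1.le hcIoo.2.le
    rw [hφc] at hsqc
    simp at hsqc
    linarith

end A


section BB
variable {α : ℝ} {μ : ℕ → ℝ≥0∞}

lemma partial_bound (hα0 : 0 < α) (hα1 : α ≤ Real.sqrt 2 - 1) (hμ : SatisfiesRDE α μ) (K : ℕ) :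
    ∑ k ∈ Finset.range K, (k : ℝ) * (μ k).toReal ≤ (2 - (μ 0).toReal) / 2 := by
  set p := (μ 0).toReal with hp
  have key : ∀ s ∈ Ioo (0:ℝ) 1,
      ∑ k ∈ Finset.range K, (μ k).toReal * (∑ i ∈ Finset.range k, s ^ i) ≤ (2 - p) / 2 := by
    intro s hs
    have hs0 := hs.1
    have hs1 := hs.2
    have h1ms : 0 < 1 - s := by linarith
    have hgs : ∀ k : ℕ, (1 : ℝ) - s ^ k = (1 - s) * ∑ i ∈ Finset.range k, s ^ i := by
      intro k
      have := geom_sum_mul s k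
      nlinarith [this]
    have hsum1 : 1 - pgf μ s = ∑' k, ((μ k).toReal - (μ k).toReal * s ^ k) := by
      rw [← mass_real hμ, pgf]
      exact (Summable.tsum_sub (summable_toReal hμ) (summable_pgf hμ hs0.le hs1.le)).symm
    have hpartial : ∑ k ∈ Finset.range K, ((μ k).toReal - (μ k).toReal * s ^ k)
        ≤ 1 - pgf μ s := by
      rw [hsum1]
      apply Summable.sum_le_tsum
      · intro k _
        have : s ^ k ≤ 1 := pow_le_one₀ hs0.le hs1.le
        nlinarith [ENNReal.toReal_nonneg (a := μ k)]
      · exact (summable_toReal hμ).sub (summable_pgf hμ hs0.le hs1.le)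
    have hφ := phi_pos hα0 hα1 hμ s ⟨hs0.le, hs1⟩
    have h2 : 1 - pgf μ s ≤ (1 - s) * ((2 - p) / 2) := by
      rw [← hp] at hφ
      nlinarith
    have h3 : ∑ k ∈ Finset.range K, ((μ k).toReal - (μ k).toReal * s ^ k)
        = (1 - s) * ∑ k ∈ Finset.range K, (μ k).toReal * (∑ i ∈ Finset.range k, s ^ i) := by
      rw [Finset.mul_sum]
      refine Finset.sum_congr rfl fun k _ => ?_
      linear_combination (μ k).toReal * hgs k
    have := hpartial.trans h2
    rw [h3] at this
    exact le_of_mul_le_mul_left (by linarith [this]) h1ms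
  -- take the limit s → 1⁻
  have hcont : Tendsto (fun s : ℝ => ∑ k ∈ Finset.range K, (μ k).toReal * (∑ i ∈ Finset.range k, s ^ i))
      (𝓝[<] (1:ℝ)) (𝓝 (∑ k ∈ Finset.range K, (μ k).toReal * (∑ i ∈ Finset.range k, (1:ℝ) ^ i))) := by
    apply Filter.Tendsto.mono_left _ nhdsWithin_le_nhds
    apply Continuous.tendsto
    apply continuous_finset_sum
    intro k _
    apply Continuous.mul continuous_const
    apply continuous_finset_sum
    intro i _
    exact continuous_pow i
  have hval : ∑ k ∈ Finset.range K, (μ k).toReal * (∑ i ∈ Finset.range k, (1:ℝ) ^ i)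
      = ∑ k ∈ Finset.range K, (k : ℝ) * (μ k).toReal := by
    refine Finset.sum_congr rfl fun k _ => ?_
    simp [Finset.sum_const, mul_comm]
  rw [← hval]
  refine le_of_tendsto hcont ?_
  filter_upwards [Ioo_mem_nhdsLT_of_mem (by norm_num : (1:ℝ) ∈ Ioc 0 1)] with s hs
  exact key s hs

lemma mean_le (hα0 : 0 < α) (hα1 : α ≤ Real.sqrt 2 - 1) (hμ : SatisfiesRDE α μ) :
    meanENN μ ≤ ENNReal.ofReal ((2 - (μ 0).toReal) / 2) := by
  rw [meanENN, ENNReal.tsum_eq_iSup_sum]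
  apply iSup_le
  intro F
  set K := (F.sup id) + 1 with hK
  have hsub : F ⊆ Finset.range K := by
    intro k hk
    rw [Finset.mem_range, hK]
    exact Nat.lt_succ_of_le (Finset.le_sup (f := id) hk)
  have hmono : ∑ k ∈ F, (k : ℝ≥0∞) * μ k ≤ ∑ k ∈ Finset.range K, (k : ℝ≥0∞) * μ k :=
    Finset.sum_le_sum_of_subset hsub
  refine hmono.trans ?_
  have heq : ∑ k ∈ Finset.range K, (k : ℝ≥0∞) * μ k
      = ENNReal.ofReal (∑ k ∈ Finset.range K, (k : ℝ) * (μ k).toReal) := by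
    rw [ENNReal.ofReal_sum_of_nonneg]
    · refine Finset.sum_congr rfl fun k _ => ?_
      rw [ENNReal.ofReal_mul (by positivity), ENNReal.ofReal_natCast,
        ENNReal.ofReal_toReal (mu_ne_top hμ k)]
    · intro k _
      positivity
  rw [heq]
  exact ENNReal.ofReal_le_ofReal (partial_bound hα0 hα1 hμ K)

end BB


section CC
variable {α : ℝ} {μ : ℕ → ℝ≥0∞}

/-- real mean -/
noncomputable def mre (μ : ℕ → ℝ≥0∞) : ℝ := ∑' k : ℕ, (k : ℝ) * (μ k).toReal

lemma meanENN_toReal (hμ : SatisfiesRDE α μ) : (meanENN μ).toReal = mre μ := by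
  rw [meanENN, mre, ENNReal.tsum_toReal_eq]
  · exact tsum_congr fun k => by rw [ENNReal.toReal_mul, ENNReal.toReal_natCast]
  · intro k
    exact ENNReal.mul_ne_top (ENNReal.natCast_ne_top k) (mu_ne_top hμ k)

lemma summable_mre (hfin : meanENN μ ≠ ⊤) : Summable fun k : ℕ => (k : ℝ) * (μ k).toReal := by
  have h : Summable fun k : ℕ => ((k : ℝ≥0∞) * μ k).toReal := ENNReal.summable_toReal hfin
  refine h.congr fun k => ?_
  rw [ENNReal.toReal_mul, ENNReal.toReal_natCast]

/-- ψ as a tsum -/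
lemma psi_tsum (hμ : SatisfiesRDE α μ) {s : ℝ} (hs0 : 0 ≤ s) (hs1 : s < 1) :
    (1 - pgf μ s) / (1 - s) = ∑' k : ℕ, (μ k).toReal * (∑ i ∈ Finset.range k, s ^ i) := by
  have h1ms : 0 < 1 - s := by linarith
  have hgs : ∀ k : ℕ, (1 : ℝ) - s ^ k = (1 - s) * ∑ i ∈ Finset.range k, s ^ i := by
    intro k
    have := geom_sum_mul s k
    nlinarith [this]
  have hsum1 : 1 - pgf μ s = ∑' k, ((μ k).toReal - (μ k).toReal * s ^ k) := by
    rw [← mass_real hμ, pgf]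
    exact (Summable.tsum_sub (summable_toReal hμ) (summable_pgf hμ hs0 hs1.le)).symm
  have : ∀ k : ℕ, (μ k).toReal - (μ k).toReal * s ^ k
      = (1 - s) * ((μ k).toReal * ∑ i ∈ Finset.range k, s ^ i) := by
    intro k
    linear_combination (μ k).toReal * hgs k
  rw [hsum1]
  simp_rw [this]
  rw [tsum_mul_left]
  field_simp

lemma psi_le (hμ : SatisfiesRDE α μ) (hfin : meanENN μ ≠ ⊤) {s : ℝ} (hs0 : 0 ≤ s) (hs1 : s < 1) :
    (1 - pgf μ s) / (1 - s) ≤ mre μ := by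
  rw [psi_tsum hμ hs0 hs1, mre]
  apply Summable.tsum_le_tsum _ _ (summable_mre hfin)
  · intro k
    have hb : (∑ i ∈ Finset.range k, s ^ i) ≤ (k : ℝ) := by
      calc (∑ i ∈ Finset.range k, s ^ i) ≤ ∑ i ∈ Finset.range k, (1:ℝ) := by
            apply Finset.sum_le_sum
            intro i _
            exact pow_le_one₀ hs0 hs1.le
        _ = k := by simp
    calc (μ k).toReal * (∑ i ∈ Finset.range k, s ^ i) ≤ (μ k).toReal * k := by
          apply mul_le_mul_of_nonneg_left hb ENNReal.toReal_nonneg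
      _ = (k : ℝ) * (μ k).toReal := mul_comm _ _
  · -- summability of lhs
    apply Summable.of_nonneg_of_le _ _ (summable_mre hfin)
    · intro k
      have : (0:ℝ) ≤ ∑ i ∈ Finset.range k, s ^ i :=
        Finset.sum_nonneg fun i _ => pow_nonneg hs0 i
      positivity
    · intro k
      have hb : (∑ i ∈ Finset.range k, s ^ i) ≤ (k : ℝ) := by
        calc (∑ i ∈ Finset.range k, s ^ i) ≤ ∑ i ∈ Finset.range k, (1:ℝ) := by
              apply Finset.sum_le_sum
              intro i _
              exact pow_le_one₀ hs0 hs1.le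
          _ = k := by simp
      calc (μ k).toReal * (∑ i ∈ Finset.range k, s ^ i) ≤ (μ k).toReal * k := by
            apply mul_le_mul_of_nonneg_left hb ENNReal.toReal_nonneg
        _ = (k : ℝ) * (μ k).toReal := mul_comm _ _

lemma psi_tendsto (hμ : SatisfiesRDE α μ) (hfin : meanENN μ ≠ ⊤) :
    Tendsto (fun s => (1 - pgf μ s) / (1 - s)) (𝓝[<] (1:ℝ)) (𝓝 (mre μ)) := by
  rw [tendsto_order]
  constructor
  · -- ∀ a < mre, eventually a < ψ s
    intro a ha
    have hpartial : Tendsto (fun K => ∑ k ∈ Finset.range K, (k : ℝ) * (μ k).toReal)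
        atTop (𝓝 (mre μ)) := (summable_mre hfin).hasSum.tendsto_sum_nat
    obtain ⟨K, hK⟩ := (hpartial.eventually (eventually_gt_nhds ha)).exists
    -- polynomial tends to partial sum at s = 1
    have hpoly : Tendsto (fun s : ℝ => ∑ k ∈ Finset.range K, (μ k).toReal * (∑ i ∈ Finset.range k, s ^ i))
        (𝓝[<] (1:ℝ)) (𝓝 (∑ k ∈ Finset.range K, (k : ℝ) * (μ k).toReal)) := by
      have hval : ∑ k ∈ Finset.range K, (μ k).toReal * (∑ i ∈ Finset.range k, (1:ℝ) ^ i)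
          = ∑ k ∈ Finset.range K, (k : ℝ) * (μ k).toReal := by
        refine Finset.sum_congr rfl fun k _ => ?_
        simp [mul_comm]
      rw [← hval]
      apply Filter.Tendsto.mono_left _ nhdsWithin_le_nhds
      apply Continuous.tendsto
      apply continuous_finset_sum
      intro k _
      exact continuous_const.mul (continuous_finset_sum _ fun i _ => continuous_pow i)
    filter_upwards [hpoly.eventually (eventually_gt_nhds hK),
      Ioo_mem_nhdsLT_of_mem (by norm_num : (1:ℝ) ∈ Ioc 0 1)] with s hs1 hs2
    refine lt_of_lt_of_le hs1 ?_
    rw [psi_tsum hμ hs2.1.le hs2.2]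
    apply Summable.sum_le_tsum
    · intro k _
      have : (0:ℝ) ≤ ∑ i ∈ Finset.range k, s ^ i :=
        Finset.sum_nonneg fun i _ => pow_nonneg hs2.1.le i
      positivity
    · -- summability
      apply Summable.of_nonneg_of_le _ _ (summable_mre hfin)
      · intro k
        have : (0:ℝ) ≤ ∑ i ∈ Finset.range k, s ^ i :=
          Finset.sum_nonneg fun i _ => pow_nonneg hs2.1.le i
        positivity
      · intro k
        have hb : (∑ i ∈ Finset.range k, s ^ i) ≤ (k : ℝ) := by
          calc (∑ i ∈ Finset.range k, s ^ i) ≤ ∑ i ∈ Finset.range k, (1:ℝ) := by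
                apply Finset.sum_le_sum
                intro i _
                exact pow_le_one₀ hs2.1.le hs2.2.le
            _ = k := by simp
        calc (μ k).toReal * (∑ i ∈ Finset.range k, s ^ i) ≤ (μ k).toReal * k := by
              apply mul_le_mul_of_nonneg_left hb ENNReal.toReal_nonneg
          _ = (k : ℝ) * (μ k).toReal := mul_comm _ _
  · intro b hb
    filter_upwards [Ioo_mem_nhdsLT_of_mem (by norm_num : (1:ℝ) ∈ Ioc 0 1)] with s hs
    exact lt_of_le_of_lt (psi_le hμ hfin hs.1.le hs.2) hb

end CC


lemma D_limit {α : ℝ} : Tendsto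
    (fun s : ℝ => (((1-α) + (1+α)*s)^2 - 4*s*Real.exp (α*(s-1))) / (1-s)^2)
    (𝓝[<] (1:ℝ)) (𝓝 (1 - 2*α - α^2)) := by
  set f : ℝ → ℝ := fun s => ((1-α) + (1+α)*s)^2 - 4*s*Real.exp (α*(s-1)) with hf
  set f' : ℝ → ℝ := fun s =>
    2*((1-α) + (1+α)*s)*(1+α) - (4*Real.exp (α*(s-1)) + 4*s*(Real.exp (α*(s-1))*α)) with hf'
  set g : ℝ → ℝ := fun s => (1-s)^2 with hg
  set g' : ℝ → ℝ := fun s => 2*(1-s)*(-1) with hg'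
  have hA : ∀ s : ℝ, HasDerivAt (fun y : ℝ => (1-α) + (1+α)*y) (1+α) s := by
    intro s
    simpa using ((hasDerivAt_id s).const_mul (1+α)).const_add (1-α)
  have hE : ∀ s : ℝ, HasDerivAt (fun y : ℝ => Real.exp (α*(y-1))) (Real.exp (α*(s-1))*α) s := by
    intro s
    have hc : HasDerivAt (fun y : ℝ => α*(y-1)) α s := by
      simpa using ((hasDerivAt_id s).sub_const 1).const_mul α
    simpa [Function.comp_def] using (Real.hasDerivAt_exp (α*(s-1))).comp s hc
  have hff' : ∀ s : ℝ, HasDerivAt f (f' s) s := by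
    intro s
    have h1 : HasDerivAt (fun y : ℝ => ((1-α) + (1+α)*y)^2)
        (2*((1-α) + (1+α)*s)*(1+α)) s := by
      have := (hA s).fun_pow 2
      exact this.congr_deriv (by push_cast; ring)
    have h2 : HasDerivAt (fun y : ℝ => 4*y*Real.exp (α*(y-1)))
        (4*Real.exp (α*(s-1)) + 4*s*(Real.exp (α*(s-1))*α)) s := by
      have ha : HasDerivAt (fun y : ℝ => 4*y) 4 s := by
        simpa using (hasDerivAt_id s).const_mul (4:ℝ)
      simpa [mul_comm, mul_assoc, mul_left_comm] using ha.fun_mul (hE s)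
    exact h1.sub h2
  have hgg' : ∀ s : ℝ, HasDerivAt g (g' s) s := by
    intro s
    have : HasDerivAt (fun y : ℝ => 1 - y) (-1) s := by
      simpa using (hasDerivAt_id s).const_sub 1
    have := this.fun_pow 2
    exact this.congr_deriv (by simp [hg'])
  have hf'1 : f' 1 = 0 := by simp [hf']; ring
  have hf''' : HasDerivAt f' (2*(1 - 2*α - α^2)) 1 := by
    have h1 : HasDerivAt (fun s : ℝ => 2*((1-α) + (1+α)*s)*(1+α)) ((1+α)*2*(1+α)) 1 := by
      have := ((hA 1).const_mul 2).mul_const (1+α)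
      exact this.congr_deriv (by ring)
    have h2 : HasDerivAt (fun s : ℝ => 4*Real.exp (α*(s-1)) + 4*s*(Real.exp (α*(s-1))*α))
        ((Real.exp (α*(1-1))*α)*4 + ((4*Real.exp (α*(1-1)) + 4*1*(Real.exp (α*(1-1))*α))*α)) 1 := by
      have ha := (hE 1).const_mul 4
      have hb : HasDerivAt (fun s : ℝ => 4*s*Real.exp (α*(s-1)))
          (4*Real.exp (α*(1-1)) + 4*1*(Real.exp (α*(1-1))*α)) 1 := by
        have hc : HasDerivAt (fun y : ℝ => 4*y) 4 1 := by
          simpa using (hasDerivAt_id (1:ℝ)).const_mul (4:ℝ)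
        simpa [mul_comm, mul_assoc, mul_left_comm] using hc.fun_mul (hE 1)
      have := ha.fun_add (hb.mul_const α)
      exact (this.congr_of_eventuallyEq (Eventually.of_forall fun y => by ring)).congr_deriv (by ring)
    have := h1.fun_sub h2
    exact this.congr_deriv (by simp only [mul_one, sub_self, mul_zero, Real.exp_zero]; ring)
  apply HasDerivAt.lhopital_zero_nhdsLT
    (f' := f') (g' := g')
    (Eventually.of_forall fun s => hff' s)
    (Eventually.of_forall fun s => hgg' s)
  · filter_upwards [self_mem_nhdsWithin] with s hs
    have : s < 1 := hs
    simp only [hg']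
    intro h
    have : 1 - s = 0 := by nlinarith
    linarith
  · have hcont : ContinuousAt f 1 := (hff' 1).continuousAt
    have : Tendsto f (𝓝[<] (1:ℝ)) (𝓝 (f 1)) :=
      hcont.tendsto.mono_left (nhdsWithin_le_nhds (s := Iio (1:ℝ)))
    have hf1 : f 1 = 0 := by simp [hf]; ring
    rwa [hf1] at this
  · have hcont : ContinuousAt g 1 := (hgg' 1).continuousAt
    have : Tendsto g (𝓝[<] (1:ℝ)) (𝓝 (g 1)) :=
      hcont.tendsto.mono_left (nhdsWithin_le_nhds (s := Iio (1:ℝ)))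
    have hg1 : g 1 = 0 := by simp [hg]
    rwa [hg1] at this
  · -- f'/g' → C
    have hslope : Tendsto (fun s => (f' s - f' 1)/(s - 1)) (𝓝[<] (1:ℝ))
        (𝓝 (2*(1 - 2*α - α^2))) := by
      have := hasDerivAt_iff_tendsto_slope.mp hf'''
      have hmono : 𝓝[<] (1:ℝ) ≤ 𝓝[≠] (1:ℝ) :=
        nhdsWithin_mono 1 fun x hx => ne_of_lt hx
      have := this.mono_left hmono
      refine this.congr' ?_
      filter_upwards [self_mem_nhdsWithin] with s hs
      rw [slope_def_field]
    have h2 := hslope.div_const 2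
    rw [show 2*(1 - 2*α - α^2)/2 = 1 - 2*α - α^2 by ring] at h2
    refine h2.congr' ?_
    filter_upwards [self_mem_nhdsWithin] with s hs
    have hs1 : s < 1 := hs
    rw [hf'1, sub_zero]
    simp only [hg']
    have hden : 2*(1-s)*(-1) = (s-1)*2 := by ring
    rw [div_div, hden]


/-- For 0 < α ≤ √2 − 1, any ℕ-valued random variable X satisfying the
RDE has E[X] = (1/2)(1 + α − √(1 − 2α − α²)). -/
theorem mean_eq_small_alpha
    (α : ℝ) (hα0 : 0 < α) (hα1 : α ≤ Real.sqrt 2 - 1)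
    (μ : ℕ → ℝ≥0∞) (hμ : SatisfiesRDE α μ) :
    meanENN μ = ENNReal.ofReal ((1 / 2) * (1 + α - Real.sqrt (1 - 2 * α - α ^ 2))) := by
  have hsq2 : (1 + α) ^ 2 ≤ 2 := by
    have h1 : 1 + α ≤ Real.sqrt 2 := by linarith
    calc (1 + α) ^ 2 ≤ (Real.sqrt 2) ^ 2 := by
          apply pow_le_pow_left₀ (by positivity) h1
      _ = 2 := Real.sq_sqrt (by norm_num)
  have hαlt1 : α < 1 := by nlinarith
  have hfin : meanENN μ ≠ ⊤ :=
    ne_top_of_le_ne_top ENNReal.ofReal_ne_top (mean_le hα0 hα1 hμ)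
  have hp : (μ 0).toReal = 1 - α := by
    rw [mu0_val hα0.le hμ hfin, ENNReal.toReal_sub_of_le (ENNReal.ofReal_le_one.mpr hαlt1.le)
      (by norm_num), ENNReal.toReal_one, ENNReal.toReal_ofReal hα0.le]
  set m := mre μ with hm
  have hpsi := psi_tendsto hμ hfin
  have hT : Tendsto (fun s => 2 - 2*((1 - pgf μ s)/(1 - s)) - (1 - α)) (𝓝[<] (1:ℝ))
      (𝓝 (2 - 2*m - (1 - α))) := by
    exact (tendsto_const_nhds.sub (hpsi.const_mul 2)).sub tendsto_const_nhds
  have hsq : Tendsto (fun s => (2 - 2*((1 - pgf μ s)/(1 - s)) - (1 - α))^2) (𝓝[<] (1:ℝ))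
      (𝓝 ((2 - 2*m - (1 - α))^2)) := hT.pow 2
  have hidentity : ∀ᶠ s in 𝓝[<] (1:ℝ),
      (2 - 2*((1 - pgf μ s)/(1 - s)) - (1 - α))^2
        = (((1-α) + (1+α)*s)^2 - 4*s*Real.exp (α*(s-1))) / (1-s)^2 := by
    filter_upwards [Ioo_mem_nhdsLT_of_mem (by norm_num : (1:ℝ) ∈ Ioc 0 1)] with s hs
    have hs1 : s < 1 := hs.2
    have hne : (1:ℝ) - s ≠ 0 := by intro h; linarith
    have hq := quadReal hα0 hμ hs.1.le hs1.le
    rw [hp] at hq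
    have expand : (2 - 2*((1 - pgf μ s)/(1 - s)) - (1 - α))
        = (2 * pgf μ s - (2 * s + (1 - α) * (1 - s))) / (1 - s) := by
      field_simp
      ring
    rw [expand, div_pow, hq]
    ring
  have hC : (2 - 2*m - (1 - α))^2 = 1 - 2*α - α^2 :=
    tendsto_nhds_unique hsq (D_limit.congr' (hidentity.mono fun s h => h.symm))
  have hsign : 0 ≤ 2 - 2*m - (1 - α) := by
    refine ge_of_tendsto hT ?_
    filter_upwards [Ioo_mem_nhdsLT_of_mem (by norm_num : (1:ℝ) ∈ Ioc 0 1)] with s hs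
    have hs1 : s < 1 := hs.2
    have hne : (0:ℝ) < 1 - s := by linarith
    have hφ := phi_pos hα0 hα1 hμ s ⟨hs.1.le, hs1⟩
    rw [hp] at hφ
    have expand : (2 - 2*((1 - pgf μ s)/(1 - s)) - (1 - α))
        = (2 * pgf μ s - (2 * s + (1 - α) * (1 - s))) / (1 - s) := by
      field_simp
      ring
    rw [expand]
    positivity
  have hsqrt : Real.sqrt (1 - 2*α - α^2) = 2 - 2*m - (1 - α) := by
    rw [← hC]
    exact Real.sqrt_sq hsign
  have hmval : m = (1 / 2) * (1 + α - Real.sqrt (1 - 2*α - α^2)) := by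
    rw [hsqrt]
    ring
  rw [← ENNReal.ofReal_toReal hfin, meanENN_toReal hμ]
  rw [show (1 - 2 * α - α ^ 2) = 1 - 2*α - α^2 by ring]
  rw [← hmval]
end
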